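/- arXiv:2411.16054 — 4 statements merged into one kernel-verified Lean document; each statement's English description precedes it below -/
import Mathlib

section
/- Let F be a non-archimedean local field with residue field of size q, let n be a prime number, and let F'/F be a totally ramified extension of degree n. Let α ∈ O_{F'} with v_{F'}(α) = d, where v_{F'} is the normalized valuation of F' with v_{F'}(uniformizer) = 1, and suppose n does not divide d. Then the o_F-module length of O_{F'} / o_F[α] equals (d−1)(n−1)/2. -/
attribute [local instance] Classical.propDecidable

/-- membership in the numerical semigroup generated by `n` and `d`, with `i < n`. -/
def InS (n d j : ℕ) : Prop := ∃ i, i < n ∧ ∃ a, j = a * n + i * d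

lemma inS_intro {n d : ℕ} (a i : ℕ) (hi : i < n) : InS n d (a * n + i * d) :=
  ⟨i, hi, a, rfl⟩

lemma modeq_drop (nn a x : ℕ) : a * nn + x ≡ x [MOD nn] := by
  unfold Nat.ModEq
  rw [Nat.add_comm, Nat.add_mul_mod_self_right]

section arith
variable {n d : ℕ} (hn2 : 2 ≤ n) (hco : Nat.Coprime n d) (hd1 : 1 ≤ d)

include hco in
lemma i_unique {i i' a a' : ℕ} (hi : i < n) (hi' : i' < n)
    (h : a * n + i * d = a' * n + i' * d) : i = i' ∧ a = a' := by
  have h1 : i * d ≡ i' * d [MOD n] :=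
    ((modeq_drop n a (i*d)).symm.trans (h ▸ Nat.ModEq.refl _)).trans (modeq_drop n a' (i'*d))
  have h2 : i ≡ i' [MOD n] := Nat.ModEq.cancel_right_of_coprime hco h1
  unfold Nat.ModEq at h2
  rw [Nat.mod_eq_of_lt hi, Nat.mod_eq_of_lt hi'] at h2
  subst h2
  have hn0 : 0 < n := by omega
  exact ⟨rfl, Nat.eq_of_mul_eq_mul_right hn0 (by omega)⟩

include hco in
lemma exists_res (hn0 : 0 < n) (j : ℕ) : ∃ i, i < n ∧ i * d ≡ j [MOD n] := by
  haveI : NeZero n := ⟨hn0.ne'⟩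
  have hco' : Nat.Coprime d n := hco.symm
  let u : (ZMod n)ˣ := ZMod.unitOfCoprime d hco'
  refine ⟨(((j : ZMod n)) * (↑u⁻¹ : (ZMod n))).val, ZMod.val_lt _, ?_⟩
  rw [← ZMod.natCast_eq_natCast_iff]
  push_cast
  rw [ZMod.natCast_val, ZMod.cast_id]
  have hu : (u : ZMod n) = (d : ZMod n) := rfl
  calc (j : ZMod n) * ↑u⁻¹ * (d:ZMod n) = (j : ZMod n) * (↑u⁻¹ * ↑u) := by rw [hu]; ring
    _ = j := by rw [← Units.val_mul, inv_mul_cancel]; simp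

-- helper identities fed to omega
section ids
variable (n d : ℕ)
lemma id1 : (n-1) * d = n*d - d := Nat.sub_one_mul n d
lemma id2 : (n-1)*(d-1) = (n-1)*d - (n-1) := Nat.mul_sub_one (n-1) d ▸ rfl
end ids

include hco hd1 in
lemma inS_of_ge {j : ℕ} (hn0 : 0 < n) (hj : (n-1)*(d-1) ≤ j) : InS n d j := by
  obtain ⟨i, hi, hmod⟩ := exists_res hco hn0 j
  have hile : i * d ≤ (n-1) * d := Nat.mul_le_mul_right d (by omega)
  have e1 : (n-1) * d = n*d - d := Nat.sub_one_mul n d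
  have e1' : d ≤ n * d := Nat.le_mul_of_pos_left d hn0
  have e2 : (n-1)*(d-1) = (n-1)*d - (n-1) := by rw [Nat.mul_sub_one]
  have e2' : (n-1) ≤ (n-1)*d := Nat.le_mul_of_pos_right (n-1) hd1
  have key : i * d ≤ j := by
    by_contra hlt
    push_neg at hlt
    obtain ⟨b, hb⟩ := (Nat.modEq_iff_dvd' hlt.le).mp hmod.symm
    rcases Nat.eq_zero_or_pos b with rfl | hb1
    · omega
    have hbn : n * 1 ≤ n * b := Nat.mul_le_mul_left n hb1
    omega
  obtain ⟨a, ha⟩ := (Nat.modEq_iff_dvd' key).mp hmod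
  refine ⟨i, hi, a, ?_⟩
  have := Nat.mul_comm n a
  omega

include hco hd1 hn2 in
lemma sym1 {j : ℕ} (hj : j < (n-1)*(d-1)) (hS : InS n d j) : ¬ InS n d ((n-1)*(d-1) - 1 - j) := by
  rintro ⟨i', hi', a', ha'⟩
  obtain ⟨i, hi, a, ha⟩ := hS
  have e1 : (n-1) * d = n*d - d := Nat.sub_one_mul n d
  have e1' : d ≤ n * d := Nat.le_mul_of_pos_left d (by omega)
  have e2 : (n-1)*(d-1) = (n-1)*d - (n-1) := by rw [Nat.mul_sub_one]
  have e2' : (n-1) ≤ (n-1)*d := Nat.le_mul_of_pos_right (n-1) hd1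
  have key : (a + a' + 1) * n + (i + i' + 1) * d = n * d := by
    have h1 : (a+a'+1)*n = a*n + a'*n + n := by ring
    have h2 : (i+i'+1)*d = i*d + i'*d + d := by ring
    have h3 : i*d ≤ (n-1)*d := Nat.mul_le_mul_right d (by omega)
    omega
  have hmod : (i + i' + 1) * d ≡ n * d [MOD n] := by
    rw [← key]; exact (modeq_drop n (a+a'+1) _).symm
  have hmod2 : (i + i' + 1) * d ≡ 0 [MOD n] := by
    refine hmod.trans ?_
    have : n * d = d * n + 0 := by ring
    rw [this]
    exact modeq_drop n d 0
  have hmod' : (i + i' + 1) ≡ 0 [MOD n] := Nat.ModEq.cancel_right_of_coprime hco (by simpa using hmod2)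
  obtain ⟨c, hc⟩ := Nat.modEq_zero_iff_dvd.mp hmod'
  have hc1 : c = 1 := by
    have h0 : c ≠ 0 := by rintro rfl; omega
    have h2 : c < 2 := by
      by_contra h
      push_neg at h
      have h3 : n * 2 ≤ n * c := Nat.mul_le_mul_left n h
      omega
    omega
  rw [hc1, Nat.mul_one] at hc
  -- now i + i' + 1 = n, so (i+i'+1)*d = n*d, hence (a+a'+1)*n = 0
  have h4 : (i+i'+1)*d = n*d := by rw [hc]
  have h5 : 1*n ≤ (a+a'+1)*n := Nat.mul_le_mul_right n (by omega)
  omega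

include hco hd1 hn2 in
lemma sym2 {j : ℕ} (hj : j < (n-1)*(d-1)) (hS : ¬ InS n d j) : InS n d ((n-1)*(d-1) - 1 - j) := by
  have hn0 : 0 < n := by omega
  obtain ⟨i, hi, hmod⟩ := exists_res hco hn0 j
  have e1 : (n-1) * d = n*d - d := Nat.sub_one_mul n d
  have e1' : d ≤ n * d := Nat.le_mul_of_pos_left d hn0
  have e2 : (n-1)*(d-1) = (n-1)*d - (n-1) := by rw [Nat.mul_sub_one]
  have e2' : (n-1) ≤ (n-1)*d := Nat.le_mul_of_pos_right (n-1) hd1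
  have hile : i * d ≤ (n-1)*d := Nat.mul_le_mul_right d (by omega)
  have hlt : j < i * d := by
    by_contra h
    push_neg at h
    obtain ⟨a, ha⟩ := (Nat.modEq_iff_dvd' h).mp hmod
    have := Nat.mul_comm n a
    exact hS ⟨i, hi, a, by omega⟩
  obtain ⟨b, hb⟩ := (Nat.modEq_iff_dvd' hlt.le).mp hmod.symm
  have hcomm := Nat.mul_comm n b
  have hb1 : 1 ≤ b := by
    rcases Nat.eq_zero_or_pos b with rfl | h
    · omega
    · exact h
  refine ⟨n - 1 - i, by omega, b - 1, ?_⟩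
  have hi1 : 1 ≤ i := by
    by_contra h
    push_neg at h
    interval_cases i
    · simp at hlt
  have e3 : (n-1-i)*d + i*d = (n-1)*d := by
    rw [← Nat.add_mul]
    congr 1
    omega
  have e4 : (b-1)*n + n = b*n := by
    rw [← Nat.succ_mul]
    congr 1
    omega
  omega

include hco hd1 hn2 in
lemma gap_count :
    ((Finset.range ((n-1)*d)).filter (fun j => ¬ InS n d j)).card = (d-1)*(n-1)/2 := by
  have hn0 : 0 < n := by omega
  set K := (n-1)*(d-1) with hK
  have hKW : K ≤ (n-1)*d := Nat.mul_le_mul_left _ (by omega)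
  have hrange : ((Finset.range ((n-1)*d)).filter (fun j => ¬ InS n d j))
      = ((Finset.range K).filter (fun j => ¬ InS n d j)) := by
    ext j
    simp only [Finset.mem_filter, Finset.mem_range]
    constructor
    · rintro ⟨h1, h2⟩
      refine ⟨?_, h2⟩
      by_contra h
      exact h2 (inS_of_ge hco hd1 hn0 (by omega))
    · rintro ⟨h1, h2⟩
      exact ⟨by omega, h2⟩
  rw [hrange]
  have hcard : ((Finset.range K).filter (fun j => ¬ InS n d j)).card
      = ((Finset.range K).filter (fun j => InS n d j)).card := by
    apply Finset.card_bij' (i := fun j _ => K - 1 - j) (j := fun j _ => K - 1 - j)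
    · intro a ha
      simp only [Finset.mem_filter, Finset.mem_range] at ha ⊢
      refine ⟨by omega, ?_⟩
      by_contra h
      have := sym2 hn2 hco hd1 (show K - 1 - a < K by omega) h
      have heq : K - 1 - (K - 1 - a) = a := by omega
      rw [heq] at this
      exact ha.2 this
    · intro a ha
      simp only [Finset.mem_filter, Finset.mem_range] at ha ⊢
      exact ⟨by omega, sym1 hn2 hco hd1 (by omega) ha.2⟩
    · intro a ha
      simp only [Finset.mem_filter, Finset.mem_range] at ha
      omega
    · intro a ha
      simp only [Finset.mem_filter, Finset.mem_range] at ha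
      omega
  have htot : ((Finset.range K).filter (fun j => InS n d j)).card
      + ((Finset.range K).filter (fun j => ¬ InS n d j)).card = K := by
    have h := Finset.card_filter_add_card_filter_not
      (s := Finset.range K) (p := fun j => InS n d j)
    simpa using h
  have hcomm : (d-1)*(n-1) = K := by rw [hK, Nat.mul_comm]
  omega

end arith

open IsLocalRing Submodule

/-- simple iteration helper -/
def iterFun {B : Type*} (g : ℕ → B → B) (y : B) : ℕ → B
  | 0 => y
  | (t+1) => g t (iterFun g y t)

lemma card_quot_step {R M : Type*} [Ring R] [AddCommGroup M] [Module R M] (S T : Submodule R M)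
    (h : S ≤ T) :
    Nat.card (M ⧸ S) = Nat.card (M ⧸ T) * Nat.card (Submodule.map S.mkQ T) := by
  have h1 : Nat.card (M ⧸ S) = Nat.card ((M ⧸ S) ⧸ (Submodule.map S.mkQ T)) * Nat.card (Submodule.map S.mkQ T) :=
    AddSubgroup.card_eq_card_quotient_mul_card_addSubgroup (Submodule.map S.mkQ T).toAddSubgroup
  rw [h1, Nat.card_congr (Submodule.quotientQuotientEquivQuotient S T h).toEquiv]

/-- cardinality of `B ⧸ m^j` in a DVR. -/
lemma card_quot_pow_maximalIdeal {B : Type*} [CommRing B] [IsDomain B] [IsDiscreteValuationRing B]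
    {ϖ : B} (hϖ : Irreducible ϖ) (j : ℕ) :
    Nat.card (B ⧸ (maximalIdeal B ^ j : Ideal B)) = Nat.card (ResidueField B) ^ j := by
  induction j with
  | zero =>
      simp only [pow_zero, Ideal.one_eq_top]
      have : Subsingleton (B ⧸ (⊤ : Ideal B)) := Submodule.Quotient.subsingleton_iff.mpr rfl
      exact Nat.card_of_subsingleton (Submodule.Quotient.mk 0)
  | succ j ih =>
      have hmB : maximalIdeal B = Ideal.span {ϖ} := hϖ.maximalIdeal_eq
      have h_le : (maximalIdeal B ^ (j+1) : Ideal B) ≤ maximalIdeal B ^ j :=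
        Ideal.pow_le_pow_right (by omega)
      have hstep := card_quot_step (M := B) (R := B) (maximalIdeal B ^ (j+1)) (maximalIdeal B ^ j) h_le
      -- compute the step cardinality
      have hker : Nat.card (Submodule.map (maximalIdeal B ^ (j+1) : Ideal B).mkQ
          (maximalIdeal B ^ j : Ideal B)) = Nat.card (ResidueField B) := by
        set f : B →ₗ[B] B ⧸ (maximalIdeal B ^ (j+1) : Ideal B) :=
          (maximalIdeal B ^ (j+1) : Ideal B).mkQ ∘ₗ LinearMap.toSpanSingleton B B (ϖ ^ j) with hf
        have hrange : Submodule.map (maximalIdeal B ^ (j+1) : Ideal B).mkQ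
            (maximalIdeal B ^ j : Ideal B) = LinearMap.range f := by
          rw [hf, LinearMap.range_comp, ← LinearMap.span_singleton_eq_range, hmB]
          congr 1
          exact Ideal.span_singleton_pow ϖ j
        have hkerf : LinearMap.ker f = (maximalIdeal B : Ideal B) := by
          ext x
          simp only [hf, LinearMap.mem_ker, LinearMap.comp_apply,
            LinearMap.toSpanSingleton_apply, Submodule.mkQ_apply]
          rw [Submodule.Quotient.mk_eq_zero]
          have hx : x • ϖ ^ j = x * ϖ ^ j := rfl
          rw [hx, hmB, Ideal.span_singleton_pow, Ideal.mem_span_singleton]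
          constructor
          · rintro ⟨c, hc⟩
            rw [Ideal.mem_span_singleton]
            refine ⟨c, ?_⟩
            have h2 : ϖ ^ j * x = ϖ ^ j * (ϖ * c) := by
              rw [mul_comm (ϖ ^ j) x, hc, pow_succ]
              ring
            exact mul_left_cancel₀ (pow_ne_zero j hϖ.ne_zero) h2
          · intro hxm
            rw [Ideal.mem_span_singleton] at hxm
            obtain ⟨c, hc⟩ := hxm
            exact ⟨c, by rw [hc, pow_succ]; ring⟩
        rw [hrange, ← Nat.card_congr (LinearMap.quotKerEquivRange f).toEquiv, hkerf]
        rfl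
      rw [hstep, ih, hker]
      ring

/-- Let `F` be a non-archimedean local field with ring of integers `A` and residue field of
cardinality `q`, `n` a prime, and `B` the ring of integers of a totally ramified extension of
degree `n` (so `B` is a free `A`-module of rank `n` with `m_A B = m_B ^ n`).  If `α ∈ B` has
normalized valuation `d` with `n ∤ d`, then the `A`-module length of `B / A[α]` equals
`(d-1)(n-1)/2`; since the residue field has `q` elements this length `ℓ` is characterized by
`#(B / A[α]) = q ^ ℓ`. -/
theorem stmt_4 (A : Type*) [CommRing A] [IsDomain A] [IsDiscreteValuationRing A]
    [IsAdicComplete (IsLocalRing.maximalIdeal A) A]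
    (q : ℕ) [Finite (IsLocalRing.ResidueField A)] (hq : Nat.card (IsLocalRing.ResidueField A) = q)
    (B : Type*) [CommRing B] [IsDomain B] [IsDiscreteValuationRing B] [Algebra A B]
    [Module.Free A B]
    (n : ℕ) (hn : n.Prime) (hrank : Module.finrank A B = n)
    (htot : Ideal.map (algebraMap A B) (IsLocalRing.maximalIdeal A)
      = IsLocalRing.maximalIdeal B ^ n)
    (α : B) (d : ℕ)
    (hd : α ∈ IsLocalRing.maximalIdeal B ^ d) (hd' : α ∉ IsLocalRing.maximalIdeal B ^ (d + 1))
    (hnd : ¬ n ∣ d) :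
    Nat.card (B ⧸ Subalgebra.toSubmodule (Algebra.adjoin A {α}))
      = q ^ (((d - 1) * (n - 1)) / 2) := by
  classical
  obtain ⟨ϖ, hϖ⟩ := IsDiscreteValuationRing.exists_irreducible B
  obtain ⟨π, hπ⟩ := IsDiscreteValuationRing.exists_irreducible A
  have hn2 : 2 ≤ n := hn.two_le
  have hn0 : 0 < n := by omega
  have hco : Nat.Coprime n d := (Nat.Prime.coprime_iff_not_dvd hn).mpr hnd
  have hd1 : 1 ≤ d := by
    rcases Nat.eq_zero_or_pos d with rfl | h
    · exact absurd (dvd_zero n) hnd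
    · exact h
  have hmB : maximalIdeal B = Ideal.span {ϖ} := hϖ.maximalIdeal_eq
  have hmA : maximalIdeal A = Ideal.span {π} := hπ.maximalIdeal_eq
  have hmBj : ∀ j : ℕ, (maximalIdeal B ^ j : Ideal B) = Ideal.span {ϖ ^ j} := fun j => by
    rw [hmB, Ideal.span_singleton_pow]
  have hmem : ∀ (x : B) (j : ℕ), x ∈ (maximalIdeal B ^ j : Ideal B) ↔ ϖ ^ j ∣ x := fun x j => by
    rw [hmBj]; exact Ideal.mem_span_singleton
  -- valuation of unit times power
  have hval : ∀ (w : Bˣ) (j k : ℕ), ((w : B) * ϖ ^ j ∈ (maximalIdeal B ^ k : Ideal B)) ↔ k ≤ j := by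
    intro w j k
    rw [hmem]
    constructor
    · intro hdvd
      by_contra hk
      push_neg at hk
      obtain ⟨c, hc⟩ := hdvd
      have h2 : ϖ ^ j * (w : B) = ϖ ^ j * (ϖ ^ (k - j) * c) := by
        rw [mul_comm (ϖ ^ j) (w : B), hc, ← mul_assoc, ← pow_add,
          show j + (k - j) = k by omega]
      have h3 : (w : B) = ϖ ^ (k - j) * c := mul_left_cancel₀ (pow_ne_zero j hϖ.ne_zero) h2
      obtain ⟨m, hm⟩ : ∃ m, k - j = m + 1 := ⟨k - j - 1, by omega⟩
      rw [hm] at h3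
      have h4 : ϖ ∣ (w : B) := by
        refine ⟨ϖ ^ m * c, ?_⟩
        rw [h3, pow_succ]
        ring
      exact hϖ.not_isUnit (isUnit_of_dvd_unit h4 w.isUnit)
    · intro hk
      exact (pow_dvd_pow ϖ hk).trans (Dvd.intro_left _ rfl)
  -- α = u * ϖ^d
  obtain ⟨u, hu⟩ : ∃ u : Bˣ, α = (u : B) * ϖ ^ d := by
    obtain ⟨b, hb⟩ := (hmem α d).mp hd
    have hbu : IsUnit b := by
      by_contra hb'
      have hbm : b ∈ maximalIdeal B := (mem_maximalIdeal b).mpr hb'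
      rw [hmB, Ideal.mem_span_singleton] at hbm
      obtain ⟨c, hc⟩ := hbm
      exact hd' ((hmem α (d+1)).mpr ⟨c, by rw [hb, hc, pow_succ]; ring⟩)
    obtain ⟨bu, hbu'⟩ := hbu
    exact ⟨bu, by rw [hb, hbu']; ring⟩
  -- algebraMap π = v * ϖ^n
  obtain ⟨v, hv⟩ : ∃ v : Bˣ, algebraMap A B π = (v : B) * ϖ ^ n := by
    have h1 : Ideal.span {algebraMap A B π} = Ideal.span {ϖ ^ n} := by
      rw [← Set.image_singleton, ← Ideal.map_span, ← hmA, htot, hmBj]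
    obtain ⟨w, hw⟩ := Ideal.span_singleton_eq_span_singleton.mp h1
    refine ⟨w⁻¹, ?_⟩
    calc algebraMap A B π = algebraMap A B π * (↑w * ↑w⁻¹) := by rw [Units.mul_inv, mul_one]
      _ = (algebraMap A B π * ↑w) * ↑w⁻¹ := by ring
      _ = ϖ ^ n * ↑w⁻¹ := by rw [hw]
      _ = ↑w⁻¹ * ϖ ^ n := by ring
  -- residue surjectivity
  have hres : ∀ b : B, ∃ a : A, b - algebraMap A B a ∈ maximalIdeal B := by
    haveI hfin : Module.Finite A B := Module.finite_of_finrank_pos (by rw [hrank]; omega)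
    set bas := Module.Free.chooseBasis A B with hbas
    set ι := Module.Free.ChooseBasisIndex A B with hι
    have hcardι : Fintype.card ι = n := by
      rw [← Module.finrank_eq_card_chooseBasisIndex, hrank]
    set I : Ideal A := maximalIdeal A with hI
    set ψ : B →ₗ[A] (ι → (A ⧸ I)) :=
      { toFun := fun x i => Submodule.Quotient.mk (bas.repr x i)
        map_add' := by
          intro x y
          funext i
          simp [map_add]
        map_smul' := by
          intro a x
          funext i
          show Submodule.Quotient.mk ((bas.repr (a • x)) i) = _
          rw [map_smul, Finsupp.smul_apply, Submodule.Quotient.mk_smul]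
          rfl } with hψ
    have hψap : ∀ (x : B) (i : ι), ψ x i = Submodule.Quotient.mk (bas.repr x i) := fun x i => rfl
    have hsurj : Function.Surjective ψ := by
      intro f
      choose g hg using fun i => Submodule.Quotient.mk_surjective I (f i)
      refine ⟨bas.equivFun.symm g, ?_⟩
      funext i
      rw [hψap]
      have : bas.repr (bas.equivFun.symm g) i = g i := by
        rw [← Module.Basis.equivFun_apply, LinearEquiv.apply_symm_apply]
      rw [this, hg]
    have hker : LinearMap.ker ψ = (I • ⊤ : Submodule A B) := by
      apply le_antisymm
      · intro x hx
        rw [LinearMap.mem_ker] at hx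
        rw [← bas.sum_repr x]
        apply Submodule.sum_mem
        intro i _
        refine Submodule.smul_mem_smul ?_ Submodule.mem_top
        have := congrFun hx i
        rw [hψap] at this
        exact (Submodule.Quotient.mk_eq_zero _).mp this
      · rw [Submodule.smul_le]
        intro a ha x _
        rw [LinearMap.mem_ker]
        funext i
        rw [hψap]
        have h1 : bas.repr (a • x) i = a * bas.repr x i := by
          rw [map_smul]
          rfl
        rw [h1]
        simpa using (Submodule.Quotient.mk_eq_zero _).mpr (Ideal.mul_mem_right _ _ ha)
    have e1 : (B ⧸ (I • ⊤ : Submodule A B)) ≃ₗ[A] (ι → A ⧸ I) :=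
      (Submodule.quotEquivOfEq _ _ hker.symm).trans (ψ.quotKerEquivOfSurjective hsurj)
    have hcard1 : Nat.card (B ⧸ (I • ⊤ : Submodule A B)) = q ^ n := by
      rw [Nat.card_congr e1.toEquiv, Nat.card_pi]
      have hqI : Nat.card (A ⧸ I) = q := hq
      rw [Finset.prod_const, hqI, Finset.card_univ, hcardι]
    have e2 : (I • ⊤ : Submodule A B) = Submodule.restrictScalars A (maximalIdeal B ^ n : Ideal B) := by
      rw [hI, Ideal.smul_top_eq_map, htot]
    have hcard2 : Nat.card (B ⧸ (maximalIdeal B ^ n : Ideal B)) = q ^ n := by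
      rw [← hcard1, e2]
      exact (Nat.card_congr (Submodule.Quotient.restrictScalarsEquiv A
        (maximalIdeal B ^ n : Ideal B)).toEquiv).symm
    have hkB : Nat.card (ResidueField B) = q := by
      have hc := card_quot_pow_maximalIdeal hϖ n
      rw [hcard2] at hc
      exact (Nat.pow_left_injective (by omega) hc).symm
    have hq0 : q ≠ 0 := by
      have : 0 < Nat.card (ResidueField A) := Nat.card_pos
      omega
    haveI : Finite (ResidueField B) := Nat.finite_of_card_ne_zero (by rw [hkB]; exact hq0)
    set φ : A →+* ResidueField B := (residue B).comp (algebraMap A B) with hφdef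
    have hφ : ∀ a ∈ maximalIdeal A, φ a = 0 := by
      intro a ha
      show Ideal.Quotient.mk (maximalIdeal B) (algebraMap A B a) = 0
      rw [Ideal.Quotient.eq_zero_iff_mem]
      exact (Ideal.pow_le_self (by omega)) (htot ▸ Ideal.mem_map_of_mem _ ha)
    set ψq : ResidueField A →+* ResidueField B := Ideal.Quotient.lift (maximalIdeal A) φ hφ with hψq
    have hbij : Function.Bijective ψq :=
      (Nat.bijective_iff_injective_and_card ψq).mpr ⟨ψq.injective, by rw [hq, hkB]⟩
    intro bb
    obtain ⟨ra, hra⟩ := hbij.2 (residue B bb)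
    obtain ⟨a, rfl⟩ := Ideal.Quotient.mk_surjective ra
    refine ⟨a, ?_⟩
    have h2 : residue B (algebraMap A B a) = residue B bb := by rw [← hra]; rfl
    exact Ideal.Quotient.eq.mp h2.symm
  -- monomial valuation
  have hmono : ∀ (a i : ℕ), ∃ w : Bˣ, (π ^ a : A) • α ^ i = (w : B) * ϖ ^ (a * n + i * d) := by
    intro a i
    refine ⟨v ^ a * u ^ i, ?_⟩
    rw [Algebra.smul_def, map_pow, hv, hu, Units.val_mul, Units.val_pow_eq_pow_val,
      Units.val_pow_eq_pow_val]
    ring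
  -- the module M'
  set M' : Submodule A B := Submodule.span A (Set.range fun i : Fin n => α ^ (i : ℕ)) with hM'def
  have hgen : ∀ i : Fin n, α ^ (i : ℕ) ∈ M' := fun i => Submodule.subset_span ⟨i, rfl⟩
  -- no-cancellation
  have hNC : ∀ (c : Fin n → A) (j : ℕ), (∑ i : Fin n, c i • α ^ (i : ℕ)) ∈ (maximalIdeal B ^ j : Ideal B) →
      (∑ i : Fin n, c i • α ^ (i : ℕ)) ∉ (maximalIdeal B ^ (j+1) : Ideal B) → InS n d j := by
    intro c j hj hj'
    have hex : ∀ i : Fin n, ∃ (ai : ℕ) (wi : Bˣ), c i ≠ 0 →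
        c i • α ^ (i : ℕ) = (wi : B) * ϖ ^ (ai * n + (i : ℕ) * d) := by
      intro i
      by_cases hci : c i = 0
      · exact ⟨0, 1, fun h => (h hci).elim⟩
      · obtain ⟨a, ua, hua⟩ := IsDiscreteValuationRing.eq_unit_mul_pow_irreducible hci hπ
        obtain ⟨w, hw⟩ := hmono a (i : ℕ)
        refine ⟨a, (Units.map (algebraMap A B).toMonoidHom ua) * w, fun _ => ?_⟩
        rw [hua, mul_smul, hw, Algebra.smul_def, Units.val_mul]
        have hcoe : ((Units.map (algebraMap A B).toMonoidHom ua : Bˣ) : B) = algebraMap A B ua := rfl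
        rw [hcoe]
        ring
    choose av wv hw using hex
    set T : Finset (Fin n) := Finset.univ.filter (fun i => c i ≠ 0) with hT
    have hTne : T.Nonempty := by
      by_contra hTe
      rw [Finset.not_nonempty_iff_eq_empty] at hTe
      have hzero : (∑ i : Fin n, c i • α ^ (i : ℕ)) = 0 := by
        apply Finset.sum_eq_zero
        intro i _
        have hci : c i = 0 := by
          by_contra h
          have hiT : i ∈ T := by simp [hT, h]
          rw [hTe] at hiT
          simp at hiT
        rw [hci, zero_smul]
      exact hj' (by rw [hzero]; exact Submodule.zero_mem _)
    set vfun : Fin n → ℕ := fun i => av i * n + (i : ℕ) * d with hvfun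
    obtain ⟨i0, hi0T, hi0min⟩ := Finset.exists_min_image T vfun hTne
    have hci0 : c i0 ≠ 0 := by
      simp only [hT, Finset.mem_filter] at hi0T
      exact hi0T.2
    have hrest : (∑ i : Fin n, c i • α ^ (i : ℕ)) - c i0 • α ^ ((i0 : Fin n) : ℕ)
        ∈ (maximalIdeal B ^ (vfun i0 + 1) : Ideal B) := by
      rw [← Finset.sum_erase_eq_sub (Finset.mem_univ i0)]
      apply Submodule.sum_mem
      intro i hi
      by_cases hci : c i = 0
      · rw [hci, zero_smul]; exact Submodule.zero_mem _
      · have hiT : i ∈ T := by simp [hT, hci]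
        have hne : i ≠ i0 := (Finset.mem_erase.mp hi).1
        have hgt : vfun i0 < vfun i := by
          rcases lt_or_eq_of_le (hi0min i hiT) with h | h
          · exact h
          · exfalso
            have heq := i_unique hco i0.isLt i.isLt (by rw [hvfun] at h; exact h)
            exact hne (Fin.ext heq.1.symm)
        rw [hw i hci]
        exact (hmem _ _).mpr (dvd_mul_of_dvd_right (pow_dvd_pow ϖ hgt) _)
    have hterm : c i0 • α ^ ((i0 : Fin n) : ℕ) ∈ (maximalIdeal B ^ (vfun i0) : Ideal B) := by
      rw [hw i0 hci0]
      exact (hval (wv i0) _ _).mpr le_rfl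
    have hxin : (∑ i : Fin n, c i • α ^ (i : ℕ)) ∈ (maximalIdeal B ^ (vfun i0) : Ideal B) := by
      have h1 : (∑ i : Fin n, c i • α ^ (i : ℕ))
          = ((∑ i : Fin n, c i • α ^ (i : ℕ)) - c i0 • α ^ ((i0 : Fin n) : ℕ)) + c i0 • α ^ ((i0 : Fin n) : ℕ) := by
        ring
      rw [h1]
      exact Submodule.add_mem _ (Ideal.pow_le_pow_right (by omega) hrest) hterm
    have hxnot : (∑ i : Fin n, c i • α ^ (i : ℕ)) ∉ (maximalIdeal B ^ (vfun i0 + 1) : Ideal B) := by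
      intro hmem'
      have h2 : c i0 • α ^ ((i0 : Fin n) : ℕ) ∈ (maximalIdeal B ^ (vfun i0 + 1) : Ideal B) := by
        have h3 := Submodule.sub_mem _ hmem' hrest
        simpa using h3
      rw [hw i0 hci0, hval] at h2
      have hv0 : vfun i0 = av i0 * n + (i0 : ℕ) * d := rfl
      omega
    have hjv : j = vfun i0 := by
      by_contra hne
      rcases Nat.lt_or_ge j (vfun i0) with h | h
      · exact hj' (Ideal.pow_le_pow_right (by omega) hxin)
      · exact hxnot (Ideal.pow_le_pow_right (by omega) hj)
    rw [hjv, hvfun]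
    exact inS_intro _ _ i0.isLt
  -- completeness: high powers of the maximal ideal lie in M'
  set W : ℕ := (n - 1) * d with hWdef
  have hsmultop : ∀ m : ℕ, ((maximalIdeal A ^ m : Ideal A) • ⊤ : Submodule A A)
      = (maximalIdeal A ^ m : Ideal A) := by
    intro m
    rw [smul_eq_mul, Ideal.mul_top]
  have hWsub : ∀ y ∈ (maximalIdeal B ^ W : Ideal B), y ∈ M' := by
    have hstep : ∀ (t : ℕ) (e : B), ∃ (s : A) (i : Fin n),
        e ∈ (maximalIdeal B ^ (W + t) : Ideal B) →
        (s ∈ (maximalIdeal A ^ (t / n) : Ideal A) ∧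
          e - s • α ^ ((i : Fin n) : ℕ) ∈ (maximalIdeal B ^ (W + t + 1) : Ideal B)) := by
      intro t e
      by_cases he : e ∈ (maximalIdeal B ^ (W + t) : Ideal B)
      swap
      · exact ⟨0, ⟨0, by omega⟩, fun h => absurd h he⟩
      · have hjS : InS n d (W + t) := by
          apply inS_of_ge hco hd1 hn0
          have h1 : (n-1)*(d-1) ≤ (n-1)*d := Nat.mul_le_mul_left _ (by omega)
          omega
        obtain ⟨i, hi, a, haj⟩ := hjS
        have hta : t ≤ a * n := by
          have h1 : i * d ≤ (n-1)*d := Nat.mul_le_mul_right d (by omega)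
          omega
        have htn : t / n ≤ a := by
          calc t / n ≤ (a * n) / n := Nat.div_le_div_right hta
            _ = a := Nat.mul_div_cancel a hn0
        obtain ⟨w, hwm⟩ := hmono a i
        obtain ⟨bb, hbb⟩ := (hmem e (W+t)).mp he
        obtain ⟨cc, hcc⟩ := hres (bb * ((w⁻¹ : Bˣ) : B))
        refine ⟨cc * π ^ a, ⟨i, hi⟩, fun _ => ⟨?_, ?_⟩⟩
        · have h2 : cc * π ^ a ∈ (maximalIdeal A ^ a : Ideal A) := by
            rw [hmA, Ideal.span_singleton_pow, Ideal.mem_span_singleton]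
            exact ⟨cc, mul_comm _ _⟩
          exact Ideal.pow_le_pow_right htn h2
        · have h3 : (cc * π ^ a) • α ^ ((⟨i, hi⟩ : Fin n) : ℕ)
              = algebraMap A B cc * ((w : B) * ϖ ^ (W + t)) := by
            show (cc * π ^ a) • α ^ i = _
            rw [mul_smul, hwm, ← haj, Algebra.smul_def]
          have h4 : bb - algebraMap A B cc * (w : B) ∈ maximalIdeal B := by
            have h5 : bb - algebraMap A B cc * (w : B)
                = (bb * ((w⁻¹ : Bˣ) : B) - algebraMap A B cc) * (w : B) := by
              rw [sub_mul, mul_assoc, Units.inv_mul, mul_one]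
            rw [h5]
            exact Ideal.mul_mem_right _ _ hcc
          rw [hmB, Ideal.mem_span_singleton] at h4
          obtain ⟨ee, hee⟩ := h4
          have hbbeq : bb = algebraMap A B cc * (w : B) + ϖ * ee := by rw [← hee]; ring
          rw [hmem]
          refine ⟨ee, ?_⟩
          rw [hbb, h3, hbbeq, pow_succ]
          ring
    choose sfun ifun hstep' using hstep
    intro y hy
    set E : ℕ → B := iterFun (fun t e => e - sfun t e • α ^ ((ifun t e : Fin n) : ℕ)) y with hEdef
    have hE0 : E 0 = y := rfl
    have hEsucc : ∀ t, E (t+1) = E t - sfun t (E t) • α ^ ((ifun t (E t) : Fin n) : ℕ) :=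
      fun t => rfl
    have hEmem : ∀ t, E t ∈ (maximalIdeal B ^ (W + t) : Ideal B) := by
      intro t
      induction t with
      | zero => simpa [hE0] using hy
      | succ t ih =>
          rw [hEsucc t]
          exact (hstep' t (E t) ih).2
    have hsmem : ∀ t, sfun t (E t) ∈ (maximalIdeal A ^ (t / n) : Ideal A) :=
      fun t => (hstep' t (E t) (hEmem t)).1
    set F : ℕ → Fin n → A := fun t i =>
      ∑ uu ∈ Finset.range t, (if ifun uu (E uu) = i then sfun uu (E uu) else 0) with hFdef
    have hF : ∀ t, y - (∑ i : Fin n, F t i • α ^ (i : ℕ)) = E t := by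
      intro t
      induction t with
      | zero => simp [hFdef, hE0]
      | succ t ih =>
          have hsum : (∑ i : Fin n, F (t+1) i • α ^ (i : ℕ))
              = (∑ i : Fin n, F t i • α ^ (i : ℕ))
                + sfun t (E t) • α ^ ((ifun t (E t) : Fin n) : ℕ) := by
            have h1 : ∀ i : Fin n, F (t+1) i • α ^ (i : ℕ)
                = F t i • α ^ (i : ℕ)
                  + (if ifun t (E t) = i then sfun t (E t) • α ^ (i : ℕ) else 0) := by
              intro i
              simp only [hFdef, Finset.sum_range_succ]
              rw [add_smul, ite_smul, zero_smul]
            rw [Finset.sum_congr rfl (fun i _ => h1 i), Finset.sum_add_distrib,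
              Finset.sum_ite_eq, if_pos (Finset.mem_univ _)]
          rw [hsum, hEsucc t, ← ih]
          ring
    have hGmod : ∀ (i : Fin n) {m m' : ℕ}, m ≤ m' →
        F (n*m) i ≡ F (n*m') i [SMOD ((maximalIdeal A ^ m : Ideal A) • ⊤ : Submodule A A)] := by
      intro i m m' hmm
      rw [SModEq.sub_mem, hsmultop]
      have hle : n * m ≤ n * m' := Nat.mul_le_mul_left n hmm
      have hsub : F (n*m') i - F (n*m) i
          = ∑ uu ∈ Finset.Ico (n*m) (n*m'), (if ifun uu (E uu) = i then sfun uu (E uu) else 0) := by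
        rw [Finset.sum_Ico_eq_sub _ hle]
      rw [← neg_sub, hsub]
      apply Submodule.neg_mem
      apply Submodule.sum_mem
      intro uu huu
      rw [Finset.mem_Ico] at huu
      have hdiv : m ≤ uu / n := by
        calc m = (n * m) / n := (Nat.mul_div_cancel_left m hn0).symm
          _ ≤ uu / n := Nat.div_le_div_right huu.1
      split_ifs
      · exact Ideal.pow_le_pow_right hdiv (hsmem uu)
      · exact Submodule.zero_mem _
    have hLex : ∀ i : Fin n, ∃ L : A, ∀ m : ℕ,
        F (n*m) i ≡ L [SMOD ((maximalIdeal A ^ m : Ideal A) • ⊤ : Submodule A A)] := by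
      intro i
      exact IsPrecomplete.prec (IsAdicComplete.toIsPrecomplete) (fun {m m'} h => hGmod i h)
    choose L hL using hLex
    have hxM : (∑ i : Fin n, L i • α ^ (i : ℕ)) ∈ M' :=
      Submodule.sum_mem _ (fun i _ => Submodule.smul_mem _ _ (hgen i))
    have hdiff : ∀ m : ℕ, y - (∑ i : Fin n, L i • α ^ (i : ℕ)) ∈ (maximalIdeal B ^ m : Ideal B) := by
      intro m
      have hEq : y - (∑ i : Fin n, L i • α ^ (i : ℕ))
          = E (n*m) + ∑ i : Fin n, (F (n*m) i - L i) • α ^ (i : ℕ) := by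
        rw [← hF (n*m)]
        rw [show (∑ i : Fin n, (F (n*m) i - L i) • α ^ (i : ℕ))
          = (∑ i : Fin n, F (n*m) i • α ^ (i : ℕ)) - (∑ i : Fin n, L i • α ^ (i : ℕ)) by
            rw [← Finset.sum_sub_distrib]
            exact Finset.sum_congr rfl (fun i _ => by rw [sub_smul])]
        ring
      rw [hEq]
      apply Submodule.add_mem
      · refine Ideal.pow_le_pow_right ?_ (hEmem (n*m))
        have : m ≤ n * m := Nat.le_mul_of_pos_left m hn0
        omega
      · apply Submodule.sum_mem
        intro i _
        have h5 : F (n*m) i - L i ∈ (maximalIdeal A ^ m : Ideal A) := by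
          have h6 := hL i m
          rw [SModEq.sub_mem, hsmultop] at h6
          exact h6
        have h7 : algebraMap A B (F (n*m) i - L i) ∈ (maximalIdeal B ^ (n*m) : Ideal B) := by
          have h8 : algebraMap A B (F (n*m) i - L i)
              ∈ Ideal.map (algebraMap A B) (maximalIdeal A ^ m) := Ideal.mem_map_of_mem _ h5
          rw [Ideal.map_pow, htot, ← pow_mul] at h8
          exact h8
        rw [Algebra.smul_def]
        exact Ideal.pow_le_pow_right (Nat.le_mul_of_pos_left m hn0)
          (Ideal.mul_mem_right _ _ h7)
    have hyx : y = ∑ i : Fin n, L i • α ^ (i : ℕ) := by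
      rw [← sub_eq_zero]
      by_contra hne
      obtain ⟨k, wk, hk⟩ := IsDiscreteValuationRing.eq_unit_mul_pow_irreducible hne hϖ
      have h9 := hdiff (k+1)
      rw [hk, hval] at h9
      omega
    rw [hyx]
    exact hxM
  -- A[α] = M'
  have hMM' : Subalgebra.toSubmodule (Algebra.adjoin A {α}) = M' := by
    apply le_antisymm
    · rw [Algebra.adjoin_eq_span, Submodule.span_le]
      intro x hx
      rw [SetLike.mem_coe]
      obtain ⟨k, rfl⟩ := Submonoid.mem_closure_singleton.mp hx
      by_cases hkn : k < n
      · have := hgen ⟨k, hkn⟩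
        simpa using this
      · push_neg at hkn
        apply hWsub
        have h1 : α ^ k ∈ (maximalIdeal B ^ (d * k) : Ideal B) := by
          rw [pow_mul]
          exact Ideal.pow_mem_pow hd k
        refine Ideal.pow_le_pow_right ?_ h1
        calc W = (n-1) * d := hWdef
          _ ≤ k * d := Nat.mul_le_mul_right d (by omega)
          _ = d * k := mul_comm k d
    · rw [hM'def, Submodule.span_le]
      rintro x ⟨i, rfl⟩
      rw [SetLike.mem_coe]
      exact pow_mem (Algebra.self_mem_adjoin_singleton A α) _
  -- the filtration
  set N : ℕ → Submodule A B := fun j => M' ⊔ (Submodule.restrictScalars A (Ideal.span {ϖ ^ j})) with hNdef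
  have hNle : ∀ j, N (j+1) ≤ N j := by
    intro j
    apply sup_le_sup_left
    intro x hx
    simp only [Submodule.restrictScalars_mem] at hx ⊢
    exact Ideal.span_singleton_le_span_singleton.mpr (pow_dvd_pow ϖ (by omega)) hx
  have hNdecomp : ∀ j, N j = N (j+1) ⊔ Submodule.span A {ϖ ^ j} := by
    intro j
    apply le_antisymm
    · rw [hNdef]
      apply sup_le
      · exact le_trans le_sup_left le_sup_left
      · intro x hx
        simp only [Submodule.restrictScalars_mem, Ideal.mem_span_singleton] at hx
        obtain ⟨b, hb⟩ := hx
        obtain ⟨c, hc⟩ := hres b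
        rw [hmB, Ideal.mem_span_singleton] at hc
        obtain ⟨e, he⟩ := hc
        have hbe : b = algebraMap A B c + ϖ * e := by
          have := he
          rw [sub_eq_iff_eq_add] at this
          rw [this]; ring
        have hx2 : x = ϖ ^ (j+1) * e + c • ϖ ^ j := by
          rw [hb, hbe, Algebra.smul_def, pow_succ]
          ring
        rw [hx2]
        apply Submodule.add_mem
        · apply Submodule.mem_sup_left
          apply Submodule.mem_sup_right
          simp only [Submodule.restrictScalars_mem, Ideal.mem_span_singleton]
          exact ⟨e, rfl⟩
        · apply Submodule.mem_sup_right
          exact Submodule.smul_mem _ c (Submodule.subset_span rfl)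
    · apply sup_le (hNle j)
      rw [Submodule.span_le, Set.singleton_subset_iff]
      apply Submodule.mem_sup_right
      simp only [SetLike.mem_coe, Submodule.restrictScalars_mem]
      exact Ideal.mem_span_singleton_self _
  have hNcases : ∀ j, (InS n d j → N j = N (j+1)) ∧
      (¬ InS n d j → Nat.card (Submodule.map (N (j+1)).mkQ (N j)) = q) := by
    intro j
    have hmapNj : Submodule.map (N (j+1)).mkQ (N j)
        = Submodule.span A {Submodule.Quotient.mk (p := N (j+1)) (ϖ ^ j)} := by
      rw [hNdecomp j, Submodule.map_sup]
      have h1 : Submodule.map (N (j+1)).mkQ (N (j+1)) = ⊥ := by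
        rw [eq_bot_iff]
        rintro x ⟨y, hy, rfl⟩
        simp only [Submodule.mkQ_apply, SetLike.mem_coe]
        simpa using (Submodule.Quotient.mk_eq_zero _).mpr hy
      rw [h1, bot_sup_eq, Submodule.map_span]
      congr 1
      simp [Set.image_singleton]
    constructor
    · intro hS
      obtain ⟨i, hi, a, haj⟩ := hS
      obtain ⟨w, hwm⟩ := hmono a i
      have hzM : (π ^ a : A) • α ^ i ∈ M' := by
        apply Submodule.smul_mem
        have := hgen ⟨i, hi⟩
        simpa using this
      obtain ⟨cc, hcc⟩ := hres ((w⁻¹ : Bˣ) : B)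
      have hz : (π ^ a : A) • α ^ i = (w : B) * ϖ ^ j := by rw [hwm, haj]
      have hϖj : (ϖ : B) ^ j = ((w⁻¹ : Bˣ) : B) * ((π ^ a : A) • α ^ i) := by
        rw [hz, ← mul_assoc, Units.inv_mul, one_mul]
      rw [hmB, Ideal.mem_span_singleton] at hcc
      obtain ⟨e, he⟩ := hcc
      have hw' : ((w⁻¹ : Bˣ) : B) = algebraMap A B cc + ϖ * e := by rw [← he]; ring
      have hkey : (ϖ : B) ^ j = cc • ((π ^ a : A) • α ^ i) + ϖ * e * ((π ^ a : A) • α ^ i) := by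
        rw [hϖj, hw']
        simp only [Algebra.smul_def]
        ring
      apply le_antisymm ?_ (hNle j)
      rw [hNdecomp j]
      apply sup_le le_rfl
      rw [Submodule.span_le, Set.singleton_subset_iff]
      rw [SetLike.mem_coe, hkey]
      apply Submodule.add_mem
      · exact Submodule.mem_sup_left (Submodule.smul_mem _ cc hzM)
      · apply Submodule.mem_sup_right
        simp only [Submodule.restrictScalars_mem, Ideal.mem_span_singleton]
        refine ⟨e * (w : B), ?_⟩
        rw [hz, pow_succ]
        ring
    · intro hS
      set ψ2 : A →ₗ[A] B ⧸ N (j+1) :=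
        LinearMap.toSpanSingleton A _ (Submodule.Quotient.mk (p := N (j+1)) (ϖ ^ j)) with hψ2
      have hrange2 : LinearMap.range ψ2 = Submodule.map (N (j+1)).mkQ (N j) := by
        rw [hmapNj, LinearMap.span_singleton_eq_range]
      have hker2 : LinearMap.ker ψ2 = maximalIdeal A := by
        apply le_antisymm
        · intro a ha
          rw [LinearMap.mem_ker] at ha
          have hmem2 : a • (ϖ ^ j : B) ∈ N (j+1) := by
            rw [← Submodule.Quotient.mk_eq_zero (N (j+1))]
            rw [Submodule.Quotient.mk_smul]
            exact ha
          by_contra ham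
          have hau : IsUnit a := by
            rw [mem_maximalIdeal, mem_nonunits_iff, not_not] at ham
            exact ham
          rw [hNdef] at hmem2
          obtain ⟨x, hxM, r, hr, hxr⟩ := Submodule.mem_sup.mp hmem2
          simp only [Submodule.restrictScalars_mem, Ideal.mem_span_singleton] at hr
          obtain ⟨rr, hrr⟩ := hr
          obtain ⟨au, hau'⟩ := hau.map (algebraMap A B)
          have haϖ : a • (ϖ ^ j : B) = (au : B) * ϖ ^ j := by
            rw [Algebra.smul_def, hau']
          have hxeq : x = a • (ϖ ^ j : B) - r := by rw [← hxr]; ring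
          have hxj : x ∈ (maximalIdeal B ^ j : Ideal B) := by
            rw [hxeq]
            apply Submodule.sub_mem
            · rw [haϖ]
              exact (hval au j j).mpr le_rfl
            · rw [hmem, hrr]
              exact ⟨ϖ * rr, by rw [pow_succ]; ring⟩
          have hxj' : x ∉ (maximalIdeal B ^ (j+1) : Ideal B) := by
            intro hc
            have : a • (ϖ ^ j : B) ∈ (maximalIdeal B ^ (j+1) : Ideal B) := by
              rw [← hxr]
              apply Submodule.add_mem _ hc
              rw [hmem, hrr]
              exact ⟨rr, rfl⟩
            rw [haϖ, hval] at this
            omega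
          obtain ⟨cf, hcf⟩ := (mem_span_range_iff_exists_fun A).mp hxM
          exact hS (hNC cf j (hcf ▸ hxj) (hcf ▸ hxj'))
        · rw [hmA, Ideal.span_le, Set.singleton_subset_iff]
          rw [SetLike.mem_coe, LinearMap.mem_ker, hψ2, LinearMap.toSpanSingleton_apply]
          rw [← Submodule.Quotient.mk_smul, Submodule.Quotient.mk_eq_zero]
          apply Submodule.mem_sup_right
          simp only [Submodule.restrictScalars_mem, Ideal.mem_span_singleton]
          refine ⟨(v : B) * ϖ ^ (n - 1), ?_⟩
          rw [Algebra.smul_def, hv]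
          rw [show (ϖ : B) ^ (j+1) * ((v : B) * ϖ ^ (n-1)) = (v : B) * (ϖ ^ (n-1) * ϖ ^ (j+1)) by ring,
            ← pow_add, show n - 1 + (j + 1) = n + j by omega, pow_add]
          ring
      rw [← hrange2, ← Nat.card_congr (LinearMap.quotKerEquivRange ψ2).toEquiv, hker2]
      exact hq
  -- main induction
  have hcard : ∀ j, Nat.card (B ⧸ N j) = q ^ ((Finset.range j).filter (fun m => ¬ InS n d m)).card := by
    intro j
    induction j with
    | zero =>
        have hN0 : N 0 = ⊤ := by
          rw [hNdef]
          simp only [pow_zero, Ideal.span_singleton_one]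
          rw [eq_top_iff]
          intro x _
          exact Submodule.mem_sup_right (by simp)
        rw [hN0]
        simp only [Finset.range_zero, Finset.filter_empty, Finset.card_empty, pow_zero]
        have : Subsingleton (B ⧸ (⊤ : Submodule A B)) := Submodule.Quotient.subsingleton_iff.mpr rfl
        exact Nat.card_of_subsingleton (Submodule.Quotient.mk 0)
    | succ j ih =>
        have hstep := card_quot_step (N (j+1)) (N j) (hNle j)
        have hfilter : ((Finset.range (j+1)).filter (fun m => ¬ InS n d m)).card
            = ((Finset.range j).filter (fun m => ¬ InS n d m)).card + (if InS n d j then 0 else 1) := by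
          rw [Finset.range_add_one, Finset.filter_insert]
          by_cases h : InS n d j
          · rw [if_neg (by simpa using h), if_pos h, Nat.add_zero]
          · rw [if_pos (by simpa using h), if_neg h,
              Finset.card_insert_of_notMem (by simp)]
        by_cases hS : InS n d j
        · have hNeq := (hNcases j).1 hS
          rw [hfilter, if_pos hS, ← hNeq]
          simpa using ih
        · rw [hstep, ih, (hNcases j).2 hS, hfilter, if_neg hS]
          ring
  -- conclude
  have hNW : N W = M' := by
    rw [hNdef]
    simp only [sup_eq_left]
    intro x hx
    simp only [Submodule.restrictScalars_mem] at hx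
    exact hWsub x (by rw [hmBj]; exact hx)
  rw [hMM', ← hNW, hcard W, hWdef]
  rw [gap_count hn2 hco hd1]
end

section
/- Let κ be a finite field with q elements, n ≥ 2, and u ∈ κ^×. The number of tuples (x, y, z, w) with x ∈ M_{n−1}(κ), y ∈ κ^{n−1} a column vector, z ∈ κ^{n−1} a row vector, w ∈ κ, satisfying: (i) the characteristic polynomial of x is X^{n−1}, (ii) rank(x) = n−2, and (iii) det [[x, y],[z, w]] = u, equals #GL_{n−1}(κ) · q^{n−1}. -/
open Matrix Polynomial

namespace Stmt11Aux

variable {κ : Type*} [Field κ]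

/-- The full nilpotent Jordan block of size `k+1` (ones on the superdiagonal). -/
def Jm (κ : Type*) [Field κ] (k : ℕ) : Matrix (Fin (k+1)) (Fin (k+1)) κ :=
  Matrix.of fun i j => if (i : ℕ) + 1 = (j : ℕ) then 1 else 0

lemma Jm_apply (k : ℕ) (i j : Fin (k+1)) :
    Jm κ k i j = if (i : ℕ) + 1 = (j : ℕ) then 1 else 0 := rfl

lemma Jm_pow_apply (k d : ℕ) (i j : Fin (k+1)) :
    ((Jm κ k) ^ d) i j = if (i : ℕ) + d = (j : ℕ) then 1 else 0 := by
  induction d generalizing i j with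
  | zero => simp [Matrix.one_apply, Fin.ext_iff, eq_comm]
  | succ d ih =>
    rw [pow_succ, Matrix.mul_apply]
    simp only [ih, Jm_apply]
    rcases Nat.lt_or_ge ((i:ℕ) + d) (k+1) with h | h
    · rw [Finset.sum_eq_single (⟨(i:ℕ)+d, h⟩ : Fin (k+1))]
      · rw [if_pos rfl, one_mul]
        simp only [Fin.val_mk]
        exact if_congr (by omega) rfl rfl
      · intro b _ hb
        rw [if_neg (fun hc => hb (Fin.ext hc.symm)), zero_mul]
      · intro hmem; exact absurd (Finset.mem_univ _) hmem
    · rw [if_neg (by omega), Finset.sum_eq_zero]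
      intro b _
      rw [if_neg (by omega), zero_mul]

lemma Jm_upperTriangular (k : ℕ) : (Jm κ k).BlockTriangular id := by
  intro i j h
  rw [Jm_apply, if_neg]
  simp only [id] at h
  omega

lemma Jm_charpoly (k : ℕ) : (Jm κ k).charpoly = X ^ (k+1) := by
  rw [Matrix.charpoly_of_upperTriangular _ (Jm_upperTriangular k)]
  have : ∀ i : Fin (k+1), (Jm κ k) i i = 0 := by
    intro i; rw [Jm_apply, if_neg (by omega)]
  simp [this]

lemma Jm_rank (k : ℕ) : (Jm κ k).rank = k := by
  classical
  have hrot : ∀ j : Fin (k+1), ((finRotate (k+1)) j : ℕ)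
      = if j = Fin.last k then 0 else (j:ℕ)+1 := by
    intro j
    rw [finRotate_succ_apply, Fin.val_add_one]
  have h : (Jm κ k).submatrix (Equiv.refl (Fin (k+1))) (finRotate (k+1)) =
      Matrix.diagonal (fun i : Fin (k+1) => if i = Fin.last k then (0:κ) else 1) := by
    ext i j
    simp only [Matrix.submatrix_apply, Equiv.refl_apply, Jm_apply]
    rcases eq_or_ne i j with rfl | hij
    · rw [Matrix.diagonal_apply_eq]
      rcases eq_or_ne i (Fin.last k) with rfl | hi
      · rw [if_pos rfl, if_neg (by rw [hrot, if_pos rfl]; omega)]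
      · rw [if_neg hi, if_pos (by rw [hrot, if_neg hi])]
    · rw [Matrix.diagonal_apply_ne _ hij, if_neg]
      have hij' : (i:ℕ) ≠ (j:ℕ) := fun hc => hij (Fin.ext hc)
      rw [hrot]
      split
      · omega
      · omega
  have h2 := Matrix.rank_submatrix (Jm κ k) (Equiv.refl (Fin (k+1))) (finRotate (k+1))
  rw [h, Matrix.rank_diagonal] at h2
  rw [← h2]
  have e : ∀ i : Fin (k+1), ((if i = Fin.last k then (0:κ) else 1) ≠ 0) ↔ ¬ i = Fin.last k := by
    intro i; split <;> simp_all
  rw [Fintype.card_congr (Equiv.subtypeEquivRight e), Fintype.card_subtype_compl,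
    Fintype.card_subtype_eq, Fintype.card_fin]
  omega

lemma finSumFinEquiv_symm_castSucc' (k : ℕ) (i : Fin (k+1)) :
    (finSumFinEquiv (m := k+1) (n := 1)).symm i.castSucc = Sum.inl i := by
  rw [Equiv.symm_apply_eq]
  rfl

lemma det_fromBlocks_Jm (k : ℕ) (y : Matrix (Fin (k+1)) (Fin 1) κ)
    (z : Matrix (Fin 1) (Fin (k+1)) κ) (w : κ) :
    (Matrix.fromBlocks (Jm κ k) y z (Matrix.of fun _ _ => w)).det
      = (-1)^(k+1) * (z 0 0 * y (Fin.last k) 0) := by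
  set M := Matrix.fromBlocks (Jm κ k) y z (Matrix.of fun _ _ => w) with hM
  set E := finSumFinEquiv (m := k+1) (n := 1) with hE
  rw [← Matrix.det_reindex_self E M]
  set A := Matrix.reindex E E M with hA
  have hAapp : ∀ i j, A i j = M (E.symm i) (E.symm j) := fun i j => rfl
  rw [Matrix.det_succ_column_zero]
  rw [Finset.sum_eq_single (Fin.last (k+1))]
  · have h0 : A (Fin.last (k+1)) 0 = z 0 0 := by
      rw [hAapp, hE, finSumFinEquiv_symm_last, ← Fin.castSucc_zero (n := k+1), finSumFinEquiv_symm_castSucc']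
      rfl
    have hB : ∀ i j : Fin (k+1), A.submatrix (Fin.last (k+1)).succAbove Fin.succ i j
        = if (j:ℕ) = k then y i 0 else if (i:ℕ) = (j:ℕ) then 1 else 0 := by
      intro i j
      rw [Matrix.submatrix_apply, Fin.succAbove_last, hAapp, hE, finSumFinEquiv_symm_castSucc']
      induction j using Fin.lastCases with
      | last =>
        rw [Fin.succ_last, finSumFinEquiv_symm_last, if_pos (by simp)]
        rfl
      | cast j' =>
        rw [Fin.succ_castSucc, finSumFinEquiv_symm_castSucc',
          if_neg (by simpa using j'.isLt.ne)]
        show Jm κ k i j'.succ = _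
        rw [Jm_apply]
        exact if_congr (by rw [Fin.val_succ, Fin.coe_castSucc]; omega) rfl rfl
    have hdet : (A.submatrix (Fin.last (k+1)).succAbove Fin.succ).det = y (Fin.last k) 0 := by
      rw [Matrix.det_of_upperTriangular (M := A.submatrix (Fin.last (k+1)).succAbove Fin.succ)]
      · rw [Finset.prod_eq_single (Fin.last k)]
        · rw [hB, if_pos (by simp)]
        · intro b _ hb
          rw [hB, if_neg (by simpa [Fin.ext_iff] using hb), if_pos rfl]
        · intro hmem; exact absurd (Finset.mem_univ _) hmem
      · intro a b hab
        simp only [id] at hab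
        have h1 := hab.trans_le (Fin.le_last a)
        rw [hB, if_neg (by simp [Fin.ext_iff, Fin.lt_iff_val_lt_val] at h1 ⊢; omega),
          if_neg (fun hc => absurd (Fin.ext hc) hab.ne')]
    rw [h0, hdet, Fin.val_last]
    ring
  · intro b _ hb
    obtain ⟨b', rfl⟩ := Fin.eq_castSucc_of_ne_last hb
    have : A b'.castSucc 0 = 0 := by
      rw [hAapp, hE, finSumFinEquiv_symm_castSucc', ← Fin.castSucc_zero,
        finSumFinEquiv_symm_castSucc']
      show Jm κ k b' 0 = 0
      rw [Jm_apply, if_neg (by simp)]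
    rw [this, mul_zero, zero_mul]
  · intro hmem; exact absurd (Finset.mem_univ _) hmem

lemma charpoly_units_conj' {n : Type*} [DecidableEq n] [Fintype n] {R : Type*} [CommRing R]
    (P : (Matrix n n R)ˣ) (M : Matrix n n R) :
    ((P : Matrix n n R) * M * (↑P⁻¹ : Matrix n n R)).charpoly = M.charpoly := by
  have hmap : ∀ (A B : Matrix n n R), (A * B).map (C : R →+* R[X])
      = A.map (C : R →+* R[X]) * B.map (C : R →+* R[X]) := fun A B => Matrix.map_mul
  have hPP : (P : Matrix n n R) * (↑P⁻¹ : Matrix n n R) = 1 := Units.mul_inv P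
  have hone : ((1 : Matrix n n R)).map (C : R →+* R[X]) = 1 :=
    Matrix.map_one _ (map_zero C) (map_one C)
  have key : charmatrix ((P : Matrix n n R) * M * (↑P⁻¹ : Matrix n n R))
      = (P : Matrix n n R).map (C : R →+* R[X]) * charmatrix M
        * (↑P⁻¹ : Matrix n n R).map (C : R →+* R[X]) := by
    unfold charmatrix
    simp only [RingHom.mapMatrix_apply]
    rw [mul_sub, sub_mul]
    congr 1
    · rw [← (Matrix.scalar_commute (X : R[X]) (fun r' => Commute.all X r') _).eq,
        mul_assoc, ← hmap, hPP, hone, mul_one]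
    · rw [← hmap, ← hmap]
  have hdet1 : ((P : Matrix n n R).map (C : R →+* R[X])).det
      * ((↑P⁻¹ : Matrix n n R).map (C : R →+* R[X])).det = 1 := by
    rw [← Matrix.det_mul, ← hmap, hPP, hone, Matrix.det_one]
  have hcp : ∀ (N : Matrix n n R), N.charpoly = (charmatrix N).det := fun _ => rfl
  rw [hcp, hcp, key, Matrix.det_mul, Matrix.det_mul, mul_right_comm, hdet1, one_mul]

lemma rank_units_conj' {n : Type*} [DecidableEq n] [Fintype n] {K : Type*} [Field K]
    (P : (Matrix n n K)ˣ) (M : Matrix n n K) :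
    ((P : Matrix n n K) * M * (↑P⁻¹ : Matrix n n K)).rank = M.rank := by
  have h1 : IsUnit (P : Matrix n n K).det :=
    (Matrix.isUnit_iff_isUnit_det _).mp ⟨P, rfl⟩
  have h2 : IsUnit (↑P⁻¹ : Matrix n n K).det :=
    (Matrix.isUnit_iff_isUnit_det _).mp ⟨P⁻¹, rfl⟩
  rw [Matrix.rank_mul_eq_left_of_isUnit_det _ _ h2, Matrix.rank_mul_eq_right_of_isUnit_det _ _ h1]

lemma mulVecLin_pow (k d : ℕ) (x : Matrix (Fin (k+1)) (Fin (k+1)) κ) :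
    Matrix.mulVecLin (x ^ d) = (Matrix.mulVecLin x) ^ d := by
  induction d with
  | zero => simp [Matrix.mulVecLin_one]; rfl
  | succ d ih => rw [pow_succ, Matrix.mulVecLin_mul, ih, pow_succ, Module.End.mul_eq_comp]

set_option maxHeartbeats 1000000 in
lemma conj_to_Jm (k : ℕ) (x : Matrix (Fin (k+1)) (Fin (k+1)) κ)
    (h1 : x.charpoly = X ^ (k+1)) (h2 : x.rank = k) :
    ∃ P : (Matrix (Fin (k+1)) (Fin (k+1)) κ)ˣ,
      x = (P : Matrix (Fin (k+1)) (Fin (k+1)) κ) * (Jm κ k)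
        * (↑P⁻¹ : Matrix (Fin (k+1)) (Fin (k+1)) κ) := by
  classical
  have hx0 : x ^ (k+1) = 0 := by
    have h := Matrix.aeval_self_charpoly x
    rw [h1] at h
    simpa using h
  set L : (Fin (k+1) → κ) →ₗ[κ] (Fin (k+1) → κ) := Matrix.mulVecLin x with hL
  have hLnil : L ^ (k+1) = 0 := by
    rw [hL, ← mulVecLin_pow, hx0, Matrix.mulVecLin_zero]
  have hLbig : ∀ e, k + 1 ≤ e → L ^ e = 0 := by
    intro e he
    have : L ^ e = L ^ (e - (k+1)) * L ^ (k+1) := by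
      rw [← pow_add]
      congr 1
      omega
    rw [this, hLnil, mul_zero]
  have hfin : Module.finrank κ (Fin (k+1) → κ) = k + 1 := by
    simp [Module.finrank_pi]
  have hrankL : Module.finrank κ (LinearMap.range L) = k := h2
  have hker1 : Module.finrank κ (LinearMap.ker L) = 1 := by
    have h := LinearMap.finrank_range_add_finrank_ker L
    rw [hfin, hrankL] at h
    omega
  have hkerpow : ∀ d, Module.finrank κ (LinearMap.ker (L ^ d)) ≤ d := by
    intro d
    induction d with
    | zero =>
      rw [pow_zero, Module.End.one_eq_id, LinearMap.ker_id, finrank_bot]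
    | succ d ih =>
      have hmap : ∀ v ∈ LinearMap.ker (L ^ (d+1)), L v ∈ LinearMap.ker (L ^ d) := by
        intro v hv
        rw [LinearMap.mem_ker] at hv ⊢
        have : (L ^ d) (L v) = (L ^ (d+1)) v := by
          rw [pow_succ, Module.End.mul_apply]
        rw [this, hv]
      set f : (LinearMap.ker (L ^ (d+1))) →ₗ[κ] (LinearMap.ker (L ^ d)) :=
        L.restrict hmap with hf
      have hrk := LinearMap.finrank_range_add_finrank_ker f
      have hr1 : Module.finrank κ (LinearMap.range f) ≤ d :=
        le_trans (Submodule.finrank_le _) ih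
      have hr2 : Module.finrank κ (LinearMap.ker f)
          ≤ Module.finrank κ (LinearMap.ker L) := by
        have hincl : ∀ c : LinearMap.ker f,
            ((LinearMap.ker (L ^ (d+1))).subtype.comp (LinearMap.ker f).subtype) c
              ∈ LinearMap.ker L := by
          intro c
          rw [LinearMap.mem_ker]
          have hc := c.2
          rw [LinearMap.mem_ker] at hc
          exact congrArg Subtype.val hc
        have hinj : Function.Injective
            (LinearMap.codRestrict (LinearMap.ker L)
              ((LinearMap.ker (L ^ (d+1))).subtype.comp (LinearMap.ker f).subtype) hincl) := by
          intro a b hab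
          apply Subtype.ext
          have := congrArg Subtype.val hab
          simpa using this
        exact LinearMap.finrank_le_finrank_of_injective hinj
      rw [hker1] at hr2
      omega
  have hvex : ∃ v, (L ^ k) v ≠ 0 := by
    by_contra hc
    push_neg at hc
    have : LinearMap.ker (L ^ k) = ⊤ := by
      rw [LinearMap.ker_eq_top]
      exact LinearMap.ext hc
    have h := hkerpow k
    rw [this, finrank_top, hfin] at h
    omega
  obtain ⟨v, hv⟩ := hvex
  have hli : LinearIndependent κ (fun i : Fin (k+1) => (L ^ (i : ℕ)) v) := by
    rw [Fintype.linearIndependent_iff]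
    intro g hg j
    suffices hmain : ∀ m : ℕ, ∀ j : Fin (k+1), (j:ℕ) = m → g j = 0 from hmain _ j rfl
    intro m
    induction m using Nat.strongRecOn with
    | ind m ih =>
    intro j hj
    have happ := congrArg (L ^ (k - (j : ℕ))) hg
    rw [map_sum, map_zero] at happ
    have hterm : ∀ i : Fin (k+1), (L ^ (k - (j:ℕ))) (g i • (L ^ (i:ℕ)) v)
        = g i • (L ^ (k - (j:ℕ) + (i:ℕ))) v := by
      intro i
      rw [LinearMap.map_smul, ← Module.End.mul_apply, ← pow_add]
    rw [Finset.sum_congr rfl (fun i _ => hterm i)] at happ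
    rw [Finset.sum_eq_single j] at happ
    · have hkj : k - (j:ℕ) + (j:ℕ) = k := by omega
      rw [hkj] at happ
      have := smul_eq_zero.mp happ
      tauto
    · intro i _ hij
      rcases lt_or_gt_of_ne hij with hlt | hgt
      · have hlt' : (i:ℕ) < m := hj ▸ hlt
        rw [ih (i:ℕ) hlt' i rfl, zero_smul]
      · have : L ^ (k - (j:ℕ) + (i:ℕ)) = 0 := by
          apply hLbig
          have h1 : (j:ℕ) < (i:ℕ) := hgt
          have h2 : (j:ℕ) ≤ k := Nat.lt_succ_iff.mp j.isLt
          omega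
        rw [this, LinearMap.zero_apply, smul_zero]
    · intro hmem; exact absurd (Finset.mem_univ _) hmem
  have hli2 : LinearIndependent κ (fun i : Fin (k+1) => (L ^ (k - (i : ℕ))) v) := by
    have hrev : (fun i : Fin (k+1) => (L ^ (k - (i : ℕ))) v)
        = (fun i : Fin (k+1) => (L ^ (i : ℕ)) v) ∘ Fin.rev := by
      funext i
      show (L ^ (k - (i:ℕ))) v = (L ^ ((i.rev : Fin (k+1)) : ℕ)) v
      congr 2
      rw [Fin.val_rev]
      omega
    rw [hrev]
    exact hli.comp Fin.rev Fin.rev_injective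
  have hcard : Fintype.card (Fin (k+1)) = Module.finrank κ (Fin (k+1) → κ) := by
    rw [hfin, Fintype.card_fin]
  let bas : Module.Basis (Fin (k+1)) κ (Fin (k+1) → κ) :=
    basisOfLinearIndependentOfCardEqFinrank hli2 hcard
  have hbas : ∀ i, bas i = (L ^ (k - (i : ℕ))) v := by
    intro i
    rw [coe_basisOfLinearIndependentOfCardEqFinrank]
  have hmat : LinearMap.toMatrix bas bas L = Jm κ k := by
    ext i j
    rw [LinearMap.toMatrix_apply]
    induction j using Fin.cases with
    | zero =>
      have : L (bas 0) = 0 := by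
        rw [hbas]
        simp only [Fin.val_zero, Nat.sub_zero]
        rw [← Module.End.mul_apply, ← pow_succ']
        rw [hLnil]
        rfl
      rw [this, map_zero, Jm_apply, if_neg (by simp)]
      rfl
    | succ j' =>
      have : L (bas j'.succ) = bas j'.castSucc := by
        rw [hbas, hbas, ← Module.End.mul_apply, ← pow_succ']
        congr 1
        have := j'.isLt
        simp only [Fin.val_succ, Fin.coe_castSucc]
        congr 1
        omega
      rw [this, Module.Basis.repr_self_apply, Jm_apply]
      exact if_congr (by rw [Fin.val_succ, Fin.ext_iff, Fin.coe_castSucc]; omega) rfl rfl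
  let e : Module.Basis (Fin (k+1)) κ (Fin (k+1) → κ) := Pi.basisFun κ (Fin (k+1))
  have hxe : LinearMap.toMatrix e e L = x := by
    ext i j
    rw [LinearMap.toMatrix_apply]
    simp [e, hL, Matrix.mulVecLin_apply, Matrix.mulVec, dotProduct, Pi.single_apply]
  set Pm := LinearMap.toMatrix bas e LinearMap.id with hPm
  set Qm := LinearMap.toMatrix e bas LinearMap.id with hQm
  have hPQ : Pm * Qm = 1 := by
    rw [hPm, hQm, ← LinearMap.toMatrix_comp e bas e, LinearMap.id_comp, LinearMap.toMatrix_id]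
  have hQP : Qm * Pm = 1 := by
    rw [hPm, hQm, ← LinearMap.toMatrix_comp bas e bas, LinearMap.id_comp, LinearMap.toMatrix_id]
  refine ⟨⟨Pm, Qm, hPQ, hQP⟩, ?_⟩
  have hco : (↑(⟨Pm, Qm, hPQ, hQP⟩ : (Matrix (Fin (k+1)) (Fin (k+1)) κ)ˣ)⁻¹
      : Matrix (Fin (k+1)) (Fin (k+1)) κ) = Qm := rfl
  rw [hco]
  show x = Pm * Jm κ k * Qm
  rw [← hmat, ← hxe, hPm, hQm,
    ← LinearMap.toMatrix_comp bas bas e LinearMap.id L, LinearMap.id_comp,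
    ← LinearMap.toMatrix_comp e bas e L LinearMap.id, LinearMap.comp_id]

/-- polynomial in `Jm` with prescribed last column `v`. -/
def Pc (κ : Type*) [Field κ] (k : ℕ) (v : Fin (k+1) → κ) : Matrix (Fin (k+1)) (Fin (k+1)) κ :=
  ∑ i : Fin (k+1), v i • (Jm κ k) ^ (k - (i : ℕ))

lemma Pc_apply (k : ℕ) (v : Fin (k+1) → κ) (a b : Fin (k+1)) :
    Pc κ k v a b = ∑ i : Fin (k+1), v i * (if (a:ℕ) + (k - (i:ℕ)) = (b:ℕ) then 1 else 0) := by
  rw [Pc, Matrix.sum_apply]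
  refine Finset.sum_congr rfl fun i _ => ?_
  rw [Matrix.smul_apply, Jm_pow_apply, smul_eq_mul]

lemma Pc_comm (k : ℕ) (v : Fin (k+1) → κ) :
    Pc κ k v * Jm κ k = Jm κ k * Pc κ k v := by
  rw [Pc, Finset.sum_mul, Finset.mul_sum]
  refine Finset.sum_congr rfl fun i _ => ?_
  rw [smul_mul_assoc, mul_smul_comm, pow_mul_comm']

lemma Pc_lastCol (k : ℕ) (v : Fin (k+1) → κ) (a : Fin (k+1)) :
    Pc κ k v a (Fin.last k) = v a := by
  rw [Pc_apply]
  rw [Finset.sum_eq_single a]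
  · rw [if_pos (by rw [Fin.val_last]; have := a.isLt; omega), mul_one]
  · intro b _ hb
    have hb' : (b:ℕ) ≠ (a:ℕ) := fun hc => hb (Fin.ext hc)
    rw [if_neg (by rw [Fin.val_last]; have := a.isLt; have := b.isLt; omega), mul_zero]
  · intro hmem; exact absurd (Finset.mem_univ _) hmem

lemma col_determines (k : ℕ) (M : Matrix (Fin (k+1)) (Fin (k+1)) κ)
    (hM : M * Jm κ k = Jm κ k * M) (a b : Fin (k+1)) :
    M a b = ((Jm κ k) ^ (k - (b:ℕ)) *ᵥ (fun c => M c (Fin.last k))) a := by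
  have hcommpow : ∀ d : ℕ, M * (Jm κ k) ^ d = (Jm κ k) ^ d * M := by
    intro d
    induction d with
    | zero => simp
    | succ d ih => rw [pow_succ, ← mul_assoc, ih, mul_assoc, hM, ← mul_assoc]
  have hsingle : ∀ b : Fin (k+1),
      (Jm κ k) ^ (k - (b:ℕ)) *ᵥ Pi.single (Fin.last k) 1 = Pi.single b (1:κ) := by
    intro b
    rw [Matrix.mulVec_single_one]
    funext a
    rw [Matrix.col_apply, Jm_pow_apply, Pi.single_apply]
    have := a.isLt; have := b.isLt
    exact if_congr (by rw [Fin.val_last, Fin.ext_iff]; omega) rfl rfl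
  have hcol : (fun c => M c (Fin.last k)) = M *ᵥ Pi.single (Fin.last k) 1 := by
    rw [Matrix.mulVec_single_one]
    funext c
    rw [Matrix.col_apply]
  calc M a b = (M *ᵥ Pi.single b 1) a := by simp [Matrix.mulVec_single]
    _ = (M *ᵥ ((Jm κ k) ^ (k - (b:ℕ)) *ᵥ Pi.single (Fin.last k) 1)) a := by rw [hsingle]
    _ = ((M * (Jm κ k) ^ (k - (b:ℕ))) *ᵥ Pi.single (Fin.last k) 1) a := by
        rw [Matrix.mulVec_mulVec]
    _ = (((Jm κ k) ^ (k - (b:ℕ)) * M) *ᵥ Pi.single (Fin.last k) 1) a := by rw [hcommpow]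
    _ = ((Jm κ k) ^ (k - (b:ℕ)) *ᵥ (M *ᵥ Pi.single (Fin.last k) 1)) a := by
        rw [Matrix.mulVec_mulVec]
    _ = _ := by rw [← hcol]

lemma commutant (k : ℕ) (M : Matrix (Fin (k+1)) (Fin (k+1)) κ)
    (hM : M * Jm κ k = Jm κ k * M) :
    M = Pc κ k (fun c => M c (Fin.last k)) := by
  ext a b
  rw [col_determines k M hM a b, col_determines k (Pc κ k _) (Pc_comm k _) a b]
  congr 1
  funext c
  rw [Pc_lastCol]

lemma Pc_det (k : ℕ) (v : Fin (k+1) → κ) :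
    (Pc κ k v).det = v (Fin.last k) ^ (k+1) := by
  have htri : (Pc κ k v).BlockTriangular id := by
    intro a b hab
    simp only [id] at hab
    rw [Pc_apply, Finset.sum_eq_zero]
    intro i _
    rw [if_neg (by have : (b:ℕ) < (a:ℕ) := hab; omega), mul_zero]
  rw [Matrix.det_of_upperTriangular htri]
  have hdiag : ∀ a : Fin (k+1), Pc κ k v a a = v (Fin.last k) := by
    intro a
    rw [Pc_apply, Finset.sum_eq_single (Fin.last k)]
    · rw [if_pos (by rw [Fin.val_last]; have := a.isLt; omega), mul_one]
    · intro b _ hb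
      have : (b:ℕ) ≠ k := fun hc => hb (Fin.ext (by rw [Fin.val_last]; exact hc))
      rw [if_neg (by have := b.isLt; omega), mul_zero]
    · intro hmem; exact absurd (Finset.mem_univ _) hmem
  calc ∏ a : Fin (k+1), Pc κ k v a a = ∏ _a : Fin (k+1), v (Fin.last k) :=
        Finset.prod_congr rfl fun a _ => hdiag a
    _ = v (Fin.last k) ^ (k+1) := by rw [Finset.prod_const, Finset.card_univ, Fintype.card_fin]

/-- the stabilizer of `Jm` under conjugation. -/
noncomputable def stabEquiv (k : ℕ) :
    MulAction.stabilizer (ConjAct (Matrix (Fin (k+1)) (Fin (k+1)) κ)ˣ) (Jm κ k)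
      ≃ {v : Fin (k+1) → κ // v (Fin.last k) ≠ 0} := by
  classical
  refine
  { toFun := fun g => ⟨fun c => ((ConjAct.ofConjAct g.val : (Matrix (Fin (k+1)) (Fin (k+1)) κ)ˣ)
      : Matrix (Fin (k+1)) (Fin (k+1)) κ) c (Fin.last k), ?_⟩
    invFun := fun v => ⟨ConjAct.toConjAct (((Matrix.isUnit_iff_isUnit_det _).mpr
      (by rw [Pc_det]; exact (pow_ne_zero _ v.prop).isUnit)).unit :
        (Matrix (Fin (k+1)) (Fin (k+1)) κ)ˣ), ?_⟩
    left_inv := ?_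
    right_inv := ?_ }
  · -- v last ≠ 0
    set u := (ConjAct.ofConjAct g.val : (Matrix (Fin (k+1)) (Fin (k+1)) κ)ˣ)
    have hg := g.prop
    rw [MulAction.mem_stabilizer_iff, ConjAct.units_smul_def] at hg
    have hcomm : (u : Matrix (Fin (k+1)) (Fin (k+1)) κ) * Jm κ k
        = Jm κ k * (u : Matrix (Fin (k+1)) (Fin (k+1)) κ) :=
      ((Units.mul_inv_eq_iff_eq_mul _).mp hg)
    have hPc := commutant k _ hcomm
    have hdet : IsUnit ((u : Matrix (Fin (k+1)) (Fin (k+1)) κ)).det :=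
      (Matrix.isUnit_iff_isUnit_det _).mp ⟨u, rfl⟩
    intro hzero
    have hzero' : ((u : (Matrix (Fin (k+1)) (Fin (k+1)) κ)ˣ) : Matrix (Fin (k+1)) (Fin (k+1)) κ)
        (Fin.last k) (Fin.last k) = 0 := hzero
    rw [hPc, Pc_det, hzero', zero_pow (Nat.succ_ne_zero k)] at hdet
    exact (not_isUnit_zero hdet : False)
  · -- membership in stabilizer
    rw [MulAction.mem_stabilizer_iff, ConjAct.units_smul_def, ConjAct.ofConjAct_toConjAct]
    rw [Units.mul_inv_eq_iff_eq_mul, IsUnit.unit_spec]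
    exact Pc_comm k v.val
  · intro g
    apply Subtype.ext
    set u := (ConjAct.ofConjAct g.val : (Matrix (Fin (k+1)) (Fin (k+1)) κ)ˣ) with hu
    have hg := g.prop
    rw [MulAction.mem_stabilizer_iff, ConjAct.units_smul_def] at hg
    have hcomm : (u : Matrix (Fin (k+1)) (Fin (k+1)) κ) * Jm κ k
        = Jm κ k * (u : Matrix (Fin (k+1)) (Fin (k+1)) κ) :=
      ((Units.mul_inv_eq_iff_eq_mul _).mp hg)
    refine ConjAct.ofConjAct.injective ?_
    rw [ConjAct.ofConjAct_toConjAct]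
    apply Units.ext
    rw [IsUnit.unit_spec]
    exact (commutant k _ hcomm).symm
  · intro v
    apply Subtype.ext
    funext c
    simp only [ConjAct.ofConjAct_toConjAct, IsUnit.unit_spec]
    exact Pc_lastCol k v.val c


lemma orbit_eq (k : ℕ) :
    MulAction.orbit (ConjAct (Matrix (Fin (k+1)) (Fin (k+1)) κ)ˣ) (Jm κ k)
      = {x : Matrix (Fin (k+1)) (Fin (k+1)) κ | x.charpoly = X ^ (k+1) ∧ x.rank = k} := by
  ext x
  rw [MulAction.mem_orbit_iff, Set.mem_setOf_eq]
  constructor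
  · rintro ⟨g, rfl⟩
    rw [ConjAct.units_smul_def]
    constructor
    · rw [charpoly_units_conj', Jm_charpoly]
    · rw [rank_units_conj', Jm_rank]
  · rintro ⟨h1, h2⟩
    obtain ⟨P, hP⟩ := conj_to_Jm k x h1 h2
    exact ⟨ConjAct.toConjAct P, by
      rw [ConjAct.units_smul_def, ConjAct.ofConjAct_toConjAct]; exact hP.symm⟩

def vEquiv (k : ℕ) : {v : Fin (k+1) → κ // v (Fin.last k) ≠ 0}
    ≃ {a : κ // a ≠ 0} × (Fin k → κ) where
  toFun v := (⟨v.val (Fin.last k), v.prop⟩, fun i => v.val i.castSucc)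
  invFun p := ⟨Fin.snoc p.2 p.1.val, by rw [Fin.snoc_last]; exact p.1.prop⟩
  left_inv v := Subtype.ext (funext fun i => Fin.lastCases
    (by simp) (fun i' => by simp) i)
  right_inv p := Prod.ext (Subtype.ext (by simp))
    (funext fun i => by simp)

variable [Fintype κ]

lemma card_GL_eq (k : ℕ) :
    Nat.card (Matrix (Fin (k+1)) (Fin (k+1)) κ)ˣ
      = Nat.card {x : Matrix (Fin (k+1)) (Fin (k+1)) κ //
          x.charpoly = X ^ (k+1) ∧ x.rank = k}
        * ((Fintype.card κ - 1) * Fintype.card κ ^ k) := by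
  classical
  have hcard := Nat.card_congr
    (MulAction.orbitProdStabilizerEquivGroup
      (ConjAct (Matrix (Fin (k+1)) (Fin (k+1)) κ)ˣ) (Jm κ k))
  rw [Nat.card_prod] at hcard
  have h1 : Nat.card (MulAction.orbit (ConjAct (Matrix (Fin (k+1)) (Fin (k+1)) κ)ˣ) (Jm κ k))
      = Nat.card {x : Matrix (Fin (k+1)) (Fin (k+1)) κ //
          x.charpoly = X ^ (k+1) ∧ x.rank = k} :=
    Nat.card_congr (Equiv.setCongr (orbit_eq k))
  have h2 : Nat.card
      (MulAction.stabilizer (ConjAct (Matrix (Fin (k+1)) (Fin (k+1)) κ)ˣ) (Jm κ k))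
      = (Fintype.card κ - 1) * Fintype.card κ ^ k := by
    rw [Nat.card_congr ((stabEquiv k).trans (vEquiv k)), Nat.card_prod,
      Nat.card_congr (unitsEquivNeZero (G₀ := κ)).symm, Nat.card_units,
      Nat.card_eq_fintype_card, Nat.card_eq_fintype_card (α := Fin k → κ),
      Fintype.card_fun, Fintype.card_fin]
  rw [h1, h2] at hcard
  exact hcard.symm

variable (u : κˣ)

lemma det_fromBlocks_conj (k : ℕ) (x0 : Matrix (Fin (k+1)) (Fin (k+1)) κ)
    (P : (Matrix (Fin (k+1)) (Fin (k+1)) κ)ˣ) (y : Matrix (Fin (k+1)) (Fin 1) κ)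
    (z : Matrix (Fin 1) (Fin (k+1)) κ) (w : κ) :
    (Matrix.fromBlocks ((P : Matrix (Fin (k+1)) (Fin (k+1)) κ) * x0
        * (↑P⁻¹ : Matrix (Fin (k+1)) (Fin (k+1)) κ)) y z (Matrix.of fun _ _ => w)).det
      = (Matrix.fromBlocks x0 ((↑P⁻¹ : Matrix (Fin (k+1)) (Fin (k+1)) κ) * y)
          (z * (P : Matrix (Fin (k+1)) (Fin (k+1)) κ)) (Matrix.of fun _ _ => w)).det := by
  have hPP : (P : Matrix (Fin (k+1)) (Fin (k+1)) κ)
      * (↑P⁻¹ : Matrix (Fin (k+1)) (Fin (k+1)) κ) = 1 := Units.mul_inv P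
  have key : Matrix.fromBlocks ((P : Matrix (Fin (k+1)) (Fin (k+1)) κ) * x0
        * (↑P⁻¹ : Matrix (Fin (k+1)) (Fin (k+1)) κ)) y z (Matrix.of fun _ _ => w)
      = Matrix.fromBlocks (P : Matrix (Fin (k+1)) (Fin (k+1)) κ) 0 0
          (1 : Matrix (Fin 1) (Fin 1) κ)
        * (Matrix.fromBlocks x0 ((↑P⁻¹ : Matrix (Fin (k+1)) (Fin (k+1)) κ) * y)
            (z * (P : Matrix (Fin (k+1)) (Fin (k+1)) κ)) (Matrix.of fun _ _ => w)
        * Matrix.fromBlocks (↑P⁻¹ : Matrix (Fin (k+1)) (Fin (k+1)) κ) 0 0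
            (1 : Matrix (Fin 1) (Fin 1) κ)) := by
    rw [Matrix.fromBlocks_multiply, Matrix.fromBlocks_multiply]
    simp only [Matrix.zero_mul, Matrix.mul_zero, add_zero, zero_add, Matrix.one_mul,
      Matrix.mul_one]
    rw [← Matrix.mul_assoc (P : Matrix (Fin (k+1)) (Fin (k+1)) κ)
        (↑P⁻¹ : Matrix (Fin (k+1)) (Fin (k+1)) κ) y,
      hPP, Matrix.one_mul, Matrix.mul_assoc z, hPP, Matrix.mul_one, ← Matrix.mul_assoc]
  rw [key, Matrix.det_mul, Matrix.det_mul, Matrix.det_fromBlocks_zero₂₁,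
    Matrix.det_fromBlocks_zero₂₁, Matrix.det_one, mul_one, mul_one]
  rw [← mul_assoc, mul_comm ((P : Matrix (Fin (k+1)) (Fin (k+1)) κ)).det, mul_assoc,
    ← Matrix.det_mul, hPP, Matrix.det_one, mul_one]

noncomputable def fibEquiv (k : ℕ) (x : Matrix (Fin (k+1)) (Fin (k+1)) κ)
    (hx : ∃ P : (Matrix (Fin (k+1)) (Fin (k+1)) κ)ˣ,
      x = (P : Matrix (Fin (k+1)) (Fin (k+1)) κ) * (Jm κ k)
        * (↑P⁻¹ : Matrix (Fin (k+1)) (Fin (k+1)) κ)) (c : κ) :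
    {t : Matrix (Fin (k+1)) (Fin 1) κ × Matrix (Fin 1) (Fin (k+1)) κ × κ //
        (Matrix.fromBlocks x t.1 t.2.1 (Matrix.of fun _ _ => t.2.2)).det = c}
    ≃ {t : Matrix (Fin (k+1)) (Fin 1) κ × Matrix (Fin 1) (Fin (k+1)) κ × κ //
        (Matrix.fromBlocks (Jm κ k) t.1 t.2.1 (Matrix.of fun _ _ => t.2.2)).det = c} := by
  classical
  set P := hx.choose with hPdef
  have hP := hx.choose_spec
  have hPP : (P : Matrix (Fin (k+1)) (Fin (k+1)) κ)
      * (↑P⁻¹ : Matrix (Fin (k+1)) (Fin (k+1)) κ) = 1 := Units.mul_inv P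
  have hPP' : (↑P⁻¹ : Matrix (Fin (k+1)) (Fin (k+1)) κ)
      * (P : Matrix (Fin (k+1)) (Fin (k+1)) κ) = 1 := Units.inv_mul P
  refine
    { toFun := fun t => ⟨((↑P⁻¹ : Matrix (Fin (k+1)) (Fin (k+1)) κ) * t.val.1,
        t.val.2.1 * (P : Matrix (Fin (k+1)) (Fin (k+1)) κ), t.val.2.2), ?_⟩
      invFun := fun t => ⟨((P : Matrix (Fin (k+1)) (Fin (k+1)) κ) * t.val.1,
        t.val.2.1 * (↑P⁻¹ : Matrix (Fin (k+1)) (Fin (k+1)) κ), t.val.2.2), ?_⟩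
      left_inv := ?_
      right_inv := ?_ }
  · obtain ⟨⟨yy, zz, ww⟩, ht⟩ := t
    rw [hP] at ht
    rw [det_fromBlocks_conj] at ht
    exact ht
  · obtain ⟨⟨yy, zz, ww⟩, ht⟩ := t
    rw [hP, det_fromBlocks_conj, ← Matrix.mul_assoc, hPP', Matrix.one_mul,
      Matrix.mul_assoc, hPP', Matrix.mul_one]
    exact ht
  · intro t
    apply Subtype.ext
    show ((P : Matrix (Fin (k+1)) (Fin (k+1)) κ)
        * ((↑P⁻¹ : Matrix (Fin (k+1)) (Fin (k+1)) κ) * t.val.1),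
      (t.val.2.1 * (P : Matrix (Fin (k+1)) (Fin (k+1)) κ))
        * (↑P⁻¹ : Matrix (Fin (k+1)) (Fin (k+1)) κ), t.val.2.2) = t.val
    rw [← Matrix.mul_assoc, hPP, Matrix.one_mul, Matrix.mul_assoc, hPP, Matrix.mul_one]
  · intro t
    apply Subtype.ext
    show ((↑P⁻¹ : Matrix (Fin (k+1)) (Fin (k+1)) κ)
        * ((P : Matrix (Fin (k+1)) (Fin (k+1)) κ) * t.val.1),
      (t.val.2.1 * (↑P⁻¹ : Matrix (Fin (k+1)) (Fin (k+1)) κ))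
        * (P : Matrix (Fin (k+1)) (Fin (k+1)) κ), t.val.2.2) = t.val
    rw [← Matrix.mul_assoc, hPP', Matrix.one_mul, Matrix.mul_assoc, hPP', Matrix.mul_one]

noncomputable def fibJEquiv (k : ℕ) (c : κ) (hc : c ≠ 0) :
    {t : Matrix (Fin (k+1)) (Fin 1) κ × Matrix (Fin 1) (Fin (k+1)) κ × κ //
        (Matrix.fromBlocks (Jm κ k) t.1 t.2.1 (Matrix.of fun _ _ => t.2.2)).det = c}
    ≃ {a : κ // a ≠ 0} × ((Fin k → κ) × (Fin k → κ) × κ) := by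
  classical
  set c' : κ := (-1)^(k+1) * c with hc'def
  have hsq : ((-1 : κ)^(k+1)) * ((-1 : κ)^(k+1)) = 1 := by
    rw [← mul_pow]
    norm_num
  have hc' : c' ≠ 0 := by
    rw [hc'def]
    intro h
    rcases mul_eq_zero.mp h with h | h
    · exact absurd hsq (by rw [h, zero_mul]; exact zero_ne_one)
    · exact hc h
  have hcond : ∀ t : Matrix (Fin (k+1)) (Fin 1) κ × Matrix (Fin 1) (Fin (k+1)) κ × κ,
      (Matrix.fromBlocks (Jm κ k) t.1 t.2.1 (Matrix.of fun _ _ => t.2.2)).det = c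
        ↔ t.2.1 0 0 * t.1 (Fin.last k) 0 = c' := by
    intro t
    rw [det_fromBlocks_Jm]
    constructor
    · intro h
      rw [hc'def, ← h, ← mul_assoc, hsq, one_mul]
    · intro h
      rw [h, hc'def, ← mul_assoc, hsq, one_mul]
  refine
    { toFun := fun t => (⟨t.val.2.1 0 0, ?_⟩,
        (fun i => t.val.1 i.castSucc 0, fun i => t.val.2.1 0 i.succ, t.val.2.2))
      invFun := fun p => ⟨(Matrix.of fun i _ => Fin.lastCases ((p.1.val)⁻¹ * c')
          (fun i' => p.2.1 i') i,
        Matrix.of fun _ j => Fin.cases p.1.val (fun j' => p.2.2.1 j') j, p.2.2.2), ?_⟩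
      left_inv := ?_
      right_inv := ?_ }
  · exact left_ne_zero_of_mul (by rw [(hcond t.val).mp t.prop]; exact hc')
  · rw [hcond]
    show (Fin.cases p.1.val (fun j' => p.2.2.1 j') (0 : Fin (k+1)) : κ)
      * (Fin.lastCases ((p.1.val)⁻¹ * c') (fun i' => p.2.1 i') (Fin.last k) : κ) = c'
    rw [Fin.cases_zero, Fin.lastCases_last, ← mul_assoc, mul_inv_cancel₀ p.1.prop, one_mul]
  · intro t
    apply Subtype.ext
    have ht := (hcond t.val).mp t.prop
    have ha : t.val.2.1 0 0 ≠ 0 := left_ne_zero_of_mul (by rw [ht]; exact hc')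
    refine Prod.ext ?_ (Prod.ext ?_ rfl)
    · ext i j
      have hj : j = 0 := Subsingleton.elim j 0
      subst hj
      show (Fin.lastCases ((t.val.2.1 0 0)⁻¹ * c') (fun i' => t.val.1 i'.castSucc 0) i : κ)
        = t.val.1 i 0
      induction i using Fin.lastCases with
      | last =>
        rw [Fin.lastCases_last, inv_mul_eq_iff_eq_mul₀ ha, ht]
      | cast i' =>
        rw [Fin.lastCases_castSucc]
    · ext i j
      have hi : i = 0 := Subsingleton.elim i 0
      subst hi
      show (Fin.cases (t.val.2.1 0 0) (fun j' => t.val.2.1 0 j'.succ) j : κ) = t.val.2.1 0 j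
      induction j using Fin.cases with
      | zero => rw [Fin.cases_zero]
      | succ j' => rw [Fin.cases_succ]
  · intro p
    refine Prod.ext (Subtype.ext ?_) (Prod.ext ?_ (Prod.ext ?_ rfl))
    · show (Fin.cases p.1.val (fun j' => p.2.2.1 j') (0 : Fin (k+1)) : κ) = p.1.val
      rw [Fin.cases_zero]
    · funext i
      show (Fin.lastCases ((p.1.val)⁻¹ * c') (fun i' => p.2.1 i') i.castSucc : κ) = p.2.1 i
      rw [Fin.lastCases_castSucc]
    · funext j
      show (Fin.cases p.1.val (fun j' => p.2.2.1 j') j.succ : κ) = p.2.2.1 j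
      rw [Fin.cases_succ]

theorem key (κ : Type*) [Field κ] [Fintype κ] (q : ℕ) (hq : Fintype.card κ = q)
    (k : ℕ) (u : κˣ) :
    Nat.card {p : Matrix (Fin (k+1)) (Fin (k+1)) κ × Matrix (Fin (k+1)) (Fin 1) κ ×
        Matrix (Fin 1) (Fin (k+1)) κ × κ //
        Matrix.charpoly p.1 = Polynomial.X ^ (k+1) ∧ p.1.rank = k ∧
          (Matrix.fromBlocks p.1 p.2.1 p.2.2.1 (Matrix.of fun _ _ => p.2.2.2)).det = ↑u}
      = Nat.card (GL (Fin (k+1)) κ) * q ^ (k+1) := by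
  classical
  have hc : (u : κ) ≠ 0 := Units.ne_zero u
  set Model := ({a : κ // a ≠ 0} × ((Fin k → κ) × (Fin k → κ) × κ)) with hModel
  let e1 : {p : Matrix (Fin (k+1)) (Fin (k+1)) κ × Matrix (Fin (k+1)) (Fin 1) κ ×
        Matrix (Fin 1) (Fin (k+1)) κ × κ //
        Matrix.charpoly p.1 = Polynomial.X ^ (k+1) ∧ p.1.rank = k ∧
          (Matrix.fromBlocks p.1 p.2.1 p.2.2.1 (Matrix.of fun _ _ => p.2.2.2)).det = ↑u}
      ≃ Σ x : {x : Matrix (Fin (k+1)) (Fin (k+1)) κ //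
          x.charpoly = Polynomial.X ^ (k+1) ∧ x.rank = k},
        {t : Matrix (Fin (k+1)) (Fin 1) κ × Matrix (Fin 1) (Fin (k+1)) κ × κ //
          (Matrix.fromBlocks x.val t.1 t.2.1 (Matrix.of fun _ _ => t.2.2)).det = (u : κ)} :=
    { toFun := fun p => ⟨⟨p.val.1, p.prop.1, p.prop.2.1⟩,
        ⟨(p.val.2.1, p.val.2.2.1, p.val.2.2.2), p.prop.2.2⟩⟩
      invFun := fun s => ⟨(s.1.val, s.2.val.1, s.2.val.2.1, s.2.val.2.2),
        ⟨s.1.prop.1, s.1.prop.2, s.2.prop⟩⟩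
      left_inv := fun p => rfl
      right_inv := fun s => rfl }
  let e2 := Equiv.sigmaCongrRight (fun x : {x : Matrix (Fin (k+1)) (Fin (k+1)) κ //
          x.charpoly = Polynomial.X ^ (k+1) ∧ x.rank = k} =>
      (fibEquiv k x.val (conj_to_Jm k x.val x.prop.1 x.prop.2) (u : κ)).trans
        (fibJEquiv k (u : κ) hc))
  let e3 := Equiv.sigmaEquivProd {x : Matrix (Fin (k+1)) (Fin (k+1)) κ //
          x.charpoly = Polynomial.X ^ (k+1) ∧ x.rank = k} Model
  have htot := Nat.card_congr ((e1.trans e2).trans e3)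
  rw [htot, Nat.card_prod]
  have hModelCard : Nat.card Model = (q - 1) * (q ^ k * (q ^ k * q)) := by
    rw [hModel, Nat.card_prod, Nat.card_prod, Nat.card_prod]
    rw [Nat.card_congr (unitsEquivNeZero (G₀ := κ)).symm, Nat.card_units,
      Nat.card_eq_fintype_card (α := κ), Nat.card_eq_fintype_card (α := Fin k → κ),
      Fintype.card_fun, Fintype.card_fin, hq]
  have hGL : Nat.card (GL (Fin (k+1)) κ)
      = Nat.card {x : Matrix (Fin (k+1)) (Fin (k+1)) κ //
          x.charpoly = Polynomial.X ^ (k+1) ∧ x.rank = k} * ((q - 1) * q ^ k) := by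
    have := card_GL_eq (κ := κ) k
    rw [hq] at this
    exact this
  rw [hModelCard, hGL, pow_succ]
  ring

end Stmt11Aux

/-- Over a finite field `κ` with `q` elements and `n ≥ 2`, the number of tuples `(x, y, z, w)`
with `x` an `(n−1) × (n−1)` matrix with characteristic polynomial `X^(n−1)` and rank `n−2`,
`y` a column vector, `z` a row vector, `w` a scalar, such that `det [[x, y],[z, w]] = u`
(for a fixed unit `u`), equals `#GL_(n−1)(κ) · q^(n−1)`. -/
theorem stmt_11 (κ : Type*) [Field κ] [Fintype κ] (q : ℕ) (hq : Fintype.card κ = q)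
    (n : ℕ) (hn : 2 ≤ n) (u : κˣ) :
    Nat.card {p : Matrix (Fin (n - 1)) (Fin (n - 1)) κ × Matrix (Fin (n - 1)) (Fin 1) κ ×
        Matrix (Fin 1) (Fin (n - 1)) κ × κ //
        Matrix.charpoly p.1 = Polynomial.X ^ (n - 1) ∧ p.1.rank = n - 2 ∧
          (Matrix.fromBlocks p.1 p.2.1 p.2.2.1 (Matrix.of fun _ _ => p.2.2.2)).det = ↑u}
      = Nat.card (GL (Fin (n - 1)) κ) * q ^ (n - 1) := by
  obtain ⟨k, rfl⟩ : ∃ k, n = k + 2 := ⟨n - 2, by omega⟩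
  exact Stmt11Aux.key κ q hq k u
end

section
/- Let q be a prime power, d, m ≥ 1, set R = 𝔽_{q^d}[t]/(t^m) and R' = 𝔽_{q^{2d}}[t]/(t^m), and let σ : R' → R' be the ring automorphism acting on coefficients by the Frobenius x ↦ x^{q^d} (and fixing t). Then the norm map N : (R')^× → R^×, N(u) = u·σ(u), is surjective, and its kernel has cardinality (q^d + 1)·q^{d(m−1)}. -/
/-- The truncated polynomial ring `𝔽[t]/(t^m)`. -/
abbrev TruncPoly (K' : Type*) [Field K'] (m : ℕ) : Type _ :=
  Polynomial K' ⧸ (Ideal.span {(Polynomial.X : Polynomial K') ^ m})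

open Polynomial


section TruncBasics

variable {K' : Type*} [Field K'] {m : ℕ}

/-- abbreviation for the quotient map -/
noncomputable def tmk (K' : Type*) [Field K'] (m : ℕ) : K'[X] →+* TruncPoly K' m :=
  Ideal.Quotient.mk (Ideal.span {(X : K'[X]) ^ m})

lemma tmk_surjective : Function.Surjective (tmk K' m) :=
  Ideal.Quotient.mk_surjective

/-- canonical representative of degree < m -/
noncomputable def trep (z : TruncPoly K' m) : K'[X] :=
  (tmk_surjective z).choose %ₘ (X ^ m)

lemma tmk_mem_ker {f : K'[X]} (h : (X : K'[X]) ^ m ∣ f) : tmk K' m f = 0 := by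
  rw [tmk, Ideal.Quotient.eq_zero_iff_mem, Ideal.mem_span_singleton]
  exact h

lemma tmk_trep (z : TruncPoly K' m) : tmk K' m (trep z) = z := by
  have h1 : tmk K' m ((tmk_surjective z).choose) = z := (tmk_surjective z).choose_spec
  rw [trep, modByMonic_eq_sub_mul_div _ (X ^ m), map_sub, h1, map_mul,
    tmk_mem_ker dvd_rfl, zero_mul, sub_zero]

lemma degree_trep (z : TruncPoly K' m) : (trep z).degree < (m : ℕ) := by
  show ((tmk_surjective z).choose %ₘ (X ^ m)).degree < (m : ℕ)
  simpa using degree_modByMonic_lt ((tmk_surjective z).choose) (monic_X_pow m)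

lemma trep_unique {f : K'[X]} {z : TruncPoly K' m} (hf : f.degree < (m : ℕ))
    (hz : tmk K' m f = z) : trep z = f := by
  have h : tmk K' m (trep z - f) = 0 := by rw [map_sub, hz, tmk_trep, sub_self]
  rw [tmk, Ideal.Quotient.eq_zero_iff_mem, Ideal.mem_span_singleton] at h
  have : trep z - f = 0 := by
    refine eq_zero_of_dvd_of_degree_lt h ?_
    rw [degree_X_pow]
    exact lt_of_le_of_lt (degree_sub_le _ _) (max_lt (degree_trep z) hf)
  linear_combination (norm := ring_nf) this -- trep z = f
/-- evaluation at 0 on the truncated ring -/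
noncomputable def tev (K' : Type*) [Field K'] (m : ℕ) (hm : 0 < m) :
    TruncPoly K' m →+* K' :=
  Ideal.Quotient.lift _ (evalRingHom (0 : K')) (by
    intro f hf
    rw [Ideal.mem_span_singleton] at hf
    obtain ⟨g, rfl⟩ := hf
    simp [zero_pow hm.ne'])

variable (hm : 0 < m)

lemma tev_tmk (f : K'[X]) : tev K' m hm (tmk K' m f) = f.eval 0 := rfl

lemma tev_eval (z : TruncPoly K' m) : tev K' m hm z = (trep z).eval 0 := by
  conv_lhs => rw [← tmk_trep z, tev_tmk]

lemma t_pow_dvd_iff {k : ℕ} (hk : k ≤ m) (z : TruncPoly K' m) :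
    (tmk K' m X) ^ k ∣ z ↔ (X : K'[X]) ^ k ∣ trep z := by
  constructor
  · rintro ⟨w, hw⟩
    obtain ⟨g, rfl⟩ := tmk_surjective w
    rw [← map_pow, ← map_mul] at hw
    have h : tmk K' m (trep z - X ^ k * g) = 0 := by rw [map_sub, tmk_trep, hw, sub_self]
    rw [tmk, Ideal.Quotient.eq_zero_iff_mem, Ideal.mem_span_singleton] at h
    obtain ⟨h₁, hh⟩ := h
    have : trep z = X ^ k * (g + X ^ (m - k) * h₁) := by
      rw [mul_add, ← mul_assoc, ← pow_add, Nat.add_sub_cancel' hk]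
      linear_combination hh
    exact ⟨_, this⟩
  · rintro ⟨w, hw⟩
    refine ⟨tmk K' m w, ?_⟩
    rw [← map_pow, ← map_mul, ← hw, tmk_trep]

lemma t_pow_m : (tmk K' m X) ^ m = 0 := by
  rw [← map_pow]; exact tmk_mem_ker dvd_rfl

lemma isNilpotent_of_t_dvd {z : TruncPoly K' m} (h : tmk K' m X ∣ z) : IsNilpotent z := by
  obtain ⟨w, rfl⟩ := h
  exact ⟨m, by rw [mul_pow, t_pow_m, zero_mul]⟩

lemma t_dvd_iff_tev (z : TruncPoly K' m) : tmk K' m X ∣ z ↔ tev K' m hm z = 0 := by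
  constructor
  · rintro ⟨w, rfl⟩
    obtain ⟨g, rfl⟩ := tmk_surjective w
    rw [← map_mul, tev_tmk]
    simp
  · intro h
    rw [tev_eval, ← coeff_zero_eq_eval_zero] at h
    rw [show tmk K' m X = (tmk K' m X)^1 by ring, t_pow_dvd_iff hm z, X_pow_dvd_iff]
    intro j hj
    interval_cases j
    exact h

lemma isUnit_iff_tev (z : TruncPoly K' m) : IsUnit z ↔ tev K' m hm z ≠ 0 := by
  constructor
  · rintro ⟨u, rfl⟩ h
    have := congrArg (tev K' m hm) u.mul_inv
    rw [map_mul, map_one, h, zero_mul] at this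
    exact zero_ne_one this
  · intro h
    have hd : tmk K' m X ∣ (z - tmk K' m (C (tev K' m hm z))) := by
      rw [t_dvd_iff_tev hm, map_sub, tev_tmk]
      simp
    have hu : IsUnit (tmk K' m (C (tev K' m hm z))) := by
      refine IsUnit.of_mul_eq_one (tmk K' m (C (tev K' m hm z)⁻¹)) ?_
      rw [← map_mul, ← C_mul, mul_inv_cancel₀ h, C_1, map_one]
    have := (isNilpotent_of_t_dvd hd).isUnit_add_left_of_commute hu (Commute.all _ _)
    simpa using this

/-- polynomial with coefficients `c` -/
noncomputable def cpoly (m : ℕ) (c : Fin m → K') : K'[X] :=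
  ∑ i : Fin m, C (c i) * X ^ (i : ℕ)

lemma cpoly_coeff (c : Fin m → K') (j : ℕ) :
    (cpoly m c).coeff j = if h : j < m then c ⟨j, h⟩ else 0 := by
  classical
  rw [cpoly, finset_sum_coeff]
  simp only [coeff_C_mul, coeff_X_pow, mul_ite, mul_one, mul_zero]
  split
  · next h =>
    rw [Finset.sum_eq_single (⟨j, h⟩ : Fin m)]
    · simp
    · intro i _ hi
      rw [if_neg]
      exact fun e => hi (Fin.ext e.symm)
    · simp
  · next h =>
    apply Finset.sum_eq_zero
    intro i _
    rw [if_neg]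
    exact fun e => h (e ▸ i.isLt)

lemma cpoly_degree (c : Fin m → K') : (cpoly m c).degree < (m : ℕ) := by
  rw [degree_lt_iff_coeff_zero]
  intro j hj
  rw [cpoly_coeff, dif_neg (by exact_mod_cast Nat.not_lt.2 (by exact_mod_cast hj))]

lemma trep_cpoly (c : Fin m → K') : trep (tmk K' m (cpoly m c)) = cpoly m c :=
  trep_unique (cpoly_degree c) rfl

lemma cpoly_trep (z : TruncPoly K' m) : cpoly m (fun i => (trep z).coeff (i : ℕ)) = trep z := by
  ext j
  rw [cpoly_coeff]
  split
  · rfl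
  · next h =>
    symm
    apply coeff_eq_zero_of_degree_lt
    exact lt_of_lt_of_le (degree_trep z) (by exact_mod_cast Nat.le_of_not_lt h)

/-- the coefficient equivalence -/
noncomputable def truncEquiv (K' : Type*) [Field K'] (m : ℕ) :
    (Fin m → K') ≃ TruncPoly K' m where
  toFun c := tmk K' m (cpoly m c)
  invFun z := fun i => (trep z).coeff (i : ℕ)
  left_inv c := by
    funext i
    show (trep (tmk K' m (cpoly m c))).coeff (i : ℕ) = c i
    rw [trep_cpoly, cpoly_coeff, dif_pos i.isLt]
  right_inv z := by
    show tmk K' m (cpoly m (fun i => (trep z).coeff (i : ℕ))) = z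
    rw [cpoly_trep, tmk_trep]

lemma tev_truncEquiv (c : Fin m → K') :
    tev K' m hm (truncEquiv K' m c) = c ⟨0, hm⟩ := by
  rw [truncEquiv, Equiv.coe_fn_mk, tev_tmk, ← coeff_zero_eq_eval_zero, cpoly_coeff, dif_pos hm]

end TruncBasics

section GroupCard

lemma card_range_mul_card_ker' {G H : Type*} [Group G] [Group H] (f : G →* H) :
    Nat.card f.range * Nat.card f.ker = Nat.card G := by
  rw [← Nat.card_congr (QuotientGroup.quotientKerEquivRange f).toEquiv]
  exact (Subgroup.card_eq_card_quotient_mul_card_subgroup f.ker).symm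

lemma card_range_mul_card_ker_add {G H : Type*} [AddGroup G] [AddGroup H] (f : G →+ H) :
    Nat.card f.range * Nat.card f.ker = Nat.card G := by
  rw [← Nat.card_congr (QuotientAddGroup.quotientKerEquivRange f).toEquiv]
  exact (AddSubgroup.card_eq_card_quotient_mul_card_addSubgroup f.ker).symm

end GroupCard

section FieldFacts

variable {K' : Type*} [Field K'] [Fintype K'] {Q : ℕ} (hQ : 2 ≤ Q)
  (hK' : Fintype.card K' = Q ^ 2) (σ₀ : K' →+* K') (hσ₀ : ∀ x, σ₀ x = x ^ Q)

/-- counting via roots of a polynomial -/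
lemma card_le_of_roots (P : K' → Prop) (p : K'[X]) (hp : p ≠ 0)
    (h : ∀ x, P x → p.IsRoot x) : Nat.card {x : K' // P x} ≤ p.natDegree := by
  classical
  have hinj : Function.Injective
      (fun x : {x : K' // P x} => (⟨x.1, by
        rw [Multiset.mem_toFinset, mem_roots hp]; exact h x.1 x.2⟩ :
        (p.roots.toFinset : Finset K'))) := by
    intro a b hab
    have h2 : a.1 = b.1 := congrArg (fun y : (p.roots.toFinset : Finset K') => (y : K')) hab
    exact Subtype.ext h2
  calc Nat.card {x : K' // P x} ≤ Nat.card (p.roots.toFinset : Finset K') :=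
        Nat.card_le_card_of_injective _ hinj
    _ = p.roots.toFinset.card := Nat.card_eq_finsetCard _
    _ ≤ Multiset.card p.roots := p.roots.toFinset_card_le
    _ ≤ p.natDegree := p.card_roots'

include hK' hσ₀ in
lemma sigma0_invol (x : K') : σ₀ (σ₀ x) = x := by
  rw [hσ₀, hσ₀, ← pow_mul, ← pow_two, ← hK', FiniteField.pow_card]

include hQ hσ₀ in
lemma card_fixed_le : Nat.card {x : K' // σ₀ x = x} ≤ Q := by
  have hp : (X ^ Q - X : K'[X]) ≠ 0 := fun h => by
    have h2 : (X : K'[X]) ^ Q = X := sub_eq_zero.mp h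
    have h3 := congrArg natDegree h2
    rw [natDegree_X_pow, natDegree_X] at h3
    omega
  have := card_le_of_roots (fun x => σ₀ x = x) (X ^ Q - X) hp (fun x hx => by
    simp only [IsRoot, eval_sub, eval_pow, eval_X, sub_eq_zero]
    rw [← hσ₀ x]; exact hx)
  refine le_trans this ?_
  refine le_trans (natDegree_sub_le _ _) ?_
  simp only [natDegree_X_pow, natDegree_X]
  omega

end FieldFacts

section FieldFacts2

variable {K' : Type*} [Field K'] [Fintype K'] {Q : ℕ} (hQ : 2 ≤ Q)
  (hK' : Fintype.card K' = Q ^ 2) (σ₀ : K' →+* K') (hσ₀ : ∀ x, σ₀ x = x ^ Q)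

/-- the additive trace map -/
def trMap (σ₀ : K' →+* K') : K' →+ K' where
  toFun x := x + σ₀ x
  map_zero' := by simp
  map_add' x y := by simp only [map_add]; ring

include hQ hK' hσ₀ in
lemma trace_surj_and_card :
    (∀ x : K', σ₀ x = x → ∃ y : K', y + σ₀ y = x) ∧
      Nat.card {x : K' // σ₀ x = x} = Q := by
  classical
  set T := trMap σ₀ with hT
  have hrk : Nat.card T.range * Nat.card T.ker = Q ^ 2 := by
    rw [card_range_mul_card_ker_add, Nat.card_eq_fintype_card, hK']
  have hker : Nat.card T.ker ≤ Q := by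
    have hp : (X ^ Q + X : K'[X]) ≠ 0 := fun h => by
      have h2 : (X : K'[X]) ^ Q = -X := by linear_combination h
      have h3 := congrArg natDegree h2
      rw [natDegree_X_pow, natDegree_neg, natDegree_X] at h3
      omega
    have hc := card_le_of_roots (fun x => x ∈ T.ker) (X ^ Q + X) hp (fun x hx => by
      have : x + σ₀ x = 0 := hx
      simp only [IsRoot, eval_add, eval_pow, eval_X]
      rw [← hσ₀ x]
      linear_combination this)
    refine le_trans hc (le_trans (natDegree_add_le _ _) ?_)
    simp only [natDegree_X_pow, natDegree_X]
    omega
  have hfix : Nat.card {x : K' // σ₀ x = x} ≤ Q := card_fixed_le hQ σ₀ hσ₀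
  have hinv : ∀ x : K', σ₀ (σ₀ x) = x := sigma0_invol hK' σ₀ hσ₀
  have hrange : ∀ z, z ∈ T.range → σ₀ z = z := by
    rintro z ⟨y, rfl⟩
    show σ₀ (y + σ₀ y) = y + σ₀ y
    rw [map_add, hinv]
    ring
  set f : T.range → {x : K' // σ₀ x = x} := fun z => ⟨z.1, hrange z.1 z.2⟩ with hf
  have hfinj : Function.Injective f := by
    intro a b hab
    exact Subtype.ext (congrArg (fun y : {x : K' // σ₀ x = x} => (y : K')) hab)
  have h1 : Nat.card T.range ≤ Nat.card {x : K' // σ₀ x = x} :=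
    Nat.card_le_card_of_injective f hfinj
  have hkpos : 0 < Nat.card T.ker := Nat.card_pos
  have h2 : Q ≤ Nat.card T.range := by
    have : Q * Q ≤ Nat.card T.range * Nat.card T.ker := by
      rw [hrk, pow_two]
    have h3 : Q * Nat.card T.ker ≤ Nat.card T.range * Nat.card T.ker :=
      le_trans (Nat.mul_le_mul_left _ hker) this
    exact Nat.le_of_mul_le_mul_right h3 hkpos
  have hcards : Nat.card T.range = Nat.card {x : K' // σ₀ x = x} := le_antisymm h1 (le_trans hfix h2)
  have hfsurj : Function.Surjective f :=
    ((Nat.bijective_iff_injective_and_card f).mpr ⟨hfinj, hcards⟩).2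
  constructor
  · intro x hx
    obtain ⟨⟨z, hz⟩, hzx⟩ := hfsurj ⟨x, hx⟩
    obtain ⟨y, hy⟩ := hz
    refine ⟨y, ?_⟩
    have : z = x := congrArg (fun y : {x : K' // σ₀ x = x} => (y : K')) hzx
    rw [← this, ← hy]
    rfl
  · omega

end FieldFacts2

section FieldFacts3

variable {K' : Type*} [Field K'] [Fintype K'] {Q : ℕ} (hQ : 2 ≤ Q)
  (hK' : Fintype.card K' = Q ^ 2) (σ₀ : K' →+* K') (hσ₀ : ∀ x, σ₀ x = x ^ Q)

include hQ hK' hσ₀ in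
lemma card_fixed_ne_card : Nat.card {x : K' // σ₀ x = x ∧ x ≠ 0} = Q - 1 := by
  classical
  have hfix := (trace_surj_and_card hQ hK' σ₀ hσ₀).2
  set α := {x : K' // σ₀ x = x}
  have e1 : {y : α // ¬ (y.1 = 0)} ≃ {x : K' // σ₀ x = x ∧ x ≠ 0} :=
    Equiv.subtypeSubtypeEquivSubtypeInter (fun x : K' => σ₀ x = x) (fun x => x ≠ 0)
  have hone : Fintype.card {y : α // y.1 = 0} = 1 := by
    have : Unique {y : α // y.1 = 0} :=
      { default := ⟨⟨0, map_zero σ₀⟩, rfl⟩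
        uniq := fun a => Subtype.ext (Subtype.ext (by rw [a.2])) }
    exact Fintype.card_unique
  rw [← Nat.card_congr e1, Nat.card_eq_fintype_card, Fintype.card_subtype_compl, hone,
    ← Nat.card_eq_fintype_card]
  rw [hfix]

include hQ hK' hσ₀ in
lemma norm_surj : ∀ r : K', σ₀ r = r → r ≠ 0 → ∃ a : K', a * σ₀ a = r := by
  classical
  have hpow2 : ∀ x : K', x ^ Q ^ 2 = x := fun x => by rw [← hK', FiniteField.pow_card]
  set ν : K'ˣ →* K'ˣ := powMonoidHom (Q + 1) with hν
  have hrk : Nat.card ν.range * Nat.card ν.ker = Q ^ 2 - 1 := by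
    rw [card_range_mul_card_ker', Nat.card_units, Nat.card_eq_fintype_card, hK']
  have hker : Nat.card ν.ker ≤ Q + 1 := by
    have hi : Function.Injective (fun u : ν.ker => (⟨(u.1 : K'), by
        have hu : u.1 ^ (Q + 1) = 1 := u.2
        have := congrArg (fun w : K'ˣ => (w : K')) hu
        simpa using this⟩ : {x : K' // x ^ (Q + 1) = 1})) := by
      intro a b hab
      have : (a.1 : K') = (b.1 : K') := congrArg (fun y : {x : K' // x ^ (Q+1) = 1} => (y : K')) hab
      exact Subtype.ext (Units.ext this)
    refine le_trans (Nat.card_le_card_of_injective _ hi) ?_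
    have hp : (X ^ (Q + 1) - C 1 : K'[X]) ≠ 0 := fun h => by
      have h2 : (X : K'[X]) ^ (Q + 1) = C 1 := by linear_combination h
      have h3 := congrArg natDegree h2
      rw [natDegree_X_pow, natDegree_C] at h3
      omega
    have hc := card_le_of_roots (fun x : K' => x ^ (Q + 1) = 1) (X ^ (Q + 1) - C 1) hp
      (fun x hx => by simp [IsRoot, hx])
    refine le_trans hc (le_trans (natDegree_sub_le _ _) ?_)
    simp [natDegree_X_pow, natDegree_C]
  have hrange : ∀ u : K'ˣ, u ∈ ν.range → σ₀ ↑u = (u : K') := by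
    rintro u ⟨v, rfl⟩
    show σ₀ ((v : K'ˣ) ^ (Q + 1) : K'ˣ) = (((v : K'ˣ) ^ (Q + 1) : K'ˣ) : K')
    push_cast
    rw [hσ₀, ← pow_mul]
    have : (v : K') ^ ((Q + 1) * Q) = ((v : K') ^ (Q ^ 2)) * (v : K') ^ Q := by
      rw [← pow_add]; ring_nf
    rw [this, hpow2, ← pow_succ']
  set f : ν.range → {x : K' // σ₀ x = x ∧ x ≠ 0} :=
    fun u => ⟨(u.1 : K'), hrange u.1 u.2, Units.ne_zero _⟩ with hf
  have hfinj : Function.Injective f := by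
    intro a b hab
    have : (a.1 : K') = (b.1 : K') :=
      congrArg (fun y : {x : K' // σ₀ x = x ∧ x ≠ 0} => (y : K')) hab
    exact Subtype.ext (Units.ext this)
  have h1 : Nat.card ν.range ≤ Q - 1 := by
    rw [← card_fixed_ne_card hQ hK' σ₀ hσ₀]
    exact Nat.card_le_card_of_injective f hfinj
  have hkpos : 0 < Nat.card ν.ker := Nat.card_pos
  have h2 : Q - 1 ≤ Nat.card ν.range := by
    have hqq : Q ^ 2 - 1 = (Q - 1) * (Q + 1) := by
      obtain ⟨Q', rfl⟩ : ∃ Q', Q = Q' + 1 := ⟨Q - 1, by omega⟩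
      have : (Q' + 1) ^ 2 = Q' * (Q' + 2) + 1 := by ring
      rw [this]
      simp only [Nat.add_sub_cancel]
    have h3 : (Q - 1) * Nat.card ν.ker ≤ Nat.card ν.range * Nat.card ν.ker := by
      rw [hrk, hqq]
      exact Nat.mul_le_mul_left _ hker
    exact Nat.le_of_mul_le_mul_right h3 hkpos
  have hcards : Nat.card ν.range = Nat.card {x : K' // σ₀ x = x ∧ x ≠ 0} := by
    rw [card_fixed_ne_card hQ hK' σ₀ hσ₀]; omega
  have hfsurj : Function.Surjective f :=
    ((Nat.bijective_iff_injective_and_card f).mpr ⟨hfinj, hcards⟩).2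
  intro r hr hr0
  obtain ⟨⟨u, hu⟩, huv⟩ := hfsurj ⟨r, hr, hr0⟩
  obtain ⟨v, hv⟩ := hu
  refine ⟨(v : K'), ?_⟩
  have hur : (u : K') = r := congrArg (fun y : {x : K' // σ₀ x = x ∧ x ≠ 0} => (y : K')) huv
  have hvu : ((v : K'ˣ) : K') ^ (Q + 1) = (u : K') := by
    have := congrArg (fun w : K'ˣ => (w : K')) hv
    simpa [hν] using this
  rw [hσ₀, ← pow_succ', hvu, hur]

end FieldFacts3

set_option linter.unusedSectionVars false

section Main

variable {K' : Type*} [Field K'] [Fintype K'] {Q m : ℕ} (hQ : 2 ≤ Q) (hm : 0 < m)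
  (hK' : Fintype.card K' = Q ^ 2) (σ₀ : K' →+* K') (hσ₀ : ∀ x, σ₀ x = x ^ Q)
  (σ : TruncPoly K' m →+* TruncPoly K' m)
  (hσ : σ.comp (Ideal.Quotient.mk (Ideal.span {(X : K'[X]) ^ m}))
      = (Ideal.Quotient.mk (Ideal.span {(X : K'[X]) ^ m})).comp (mapRingHom σ₀))

include hσ in
lemma sig_tmk (f : K'[X]) : σ (tmk K' m f) = tmk K' m (f.map σ₀) :=
  RingHom.congr_fun hσ f

include hK' hσ₀ hσ in
lemma sig_invol (z : TruncPoly K' m) : σ (σ z) = z := by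
  obtain ⟨f, rfl⟩ := tmk_surjective z
  rw [sig_tmk σ₀ σ hσ, sig_tmk σ₀ σ hσ, Polynomial.map_map]
  congr 1
  ext n : 1
  rw [coeff_map]
  exact sigma0_invol hK' σ₀ hσ₀ _

include hσ in
lemma sig_t : σ (tmk K' m X) = tmk K' m X := by
  rw [sig_tmk σ₀ σ hσ, map_X]

include hσ in
lemma trep_sig (z : TruncPoly K' m) : trep (σ z) = (trep z).map σ₀ := by
  refine trep_unique (lt_of_le_of_lt (degree_map_le) (degree_trep z)) ?_
  rw [← sig_tmk σ₀ σ hσ, tmk_trep]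

include hσ in
lemma coeff_fixed {z : TruncPoly K' m} (h : σ z = z) (n : ℕ) :
    σ₀ ((trep z).coeff n) = (trep z).coeff n := by
  have h1 : (trep z).map σ₀ = trep z := by rw [← trep_sig σ₀ σ hσ, h]
  conv_rhs => rw [← h1]
  rw [coeff_map]

include hσ in
lemma tev_sig (z : TruncPoly K' m) :
    tev K' m hm (σ z) = σ₀ (tev K' m hm z) := by
  rw [tev_eval, tev_eval, trep_sig σ₀ σ hσ, ← coeff_zero_eq_eval_zero,
    ← coeff_zero_eq_eval_zero, coeff_map]

include hσ in
lemma sig_dvd {z : TruncPoly K' m} {k : ℕ} (h : (tmk K' m X) ^ k ∣ z) :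
    (tmk K' m X) ^ k ∣ σ z := by
  obtain ⟨w, rfl⟩ := h
  rw [map_mul, map_pow, sig_t σ₀ σ hσ]
  exact dvd_mul_right _ _

include hQ hK' hσ₀ hσ in
lemma trace_R {z : TruncPoly K' m} (hz : σ z = z) :
    ∃ δ : TruncPoly K' m, δ + σ δ = z ∧
      ∀ k ≤ m, (tmk K' m X) ^ k ∣ z → (tmk K' m X) ^ k ∣ δ := by
  classical
  have tr_surj := (trace_surj_and_card hQ hK' σ₀ hσ₀).1
  set τ : K' → K' := fun c =>
    if h : σ₀ c = c ∧ c ≠ 0 then Classical.choose (tr_surj c h.1) else 0 with hτ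
  have htau : ∀ c : K', σ₀ c = c → τ c + σ₀ (τ c) = c := by
    intro c hc
    simp only [hτ]
    by_cases h0 : c = 0
    · subst h0
      rw [dif_neg (by simp)]
      simp
    · rw [dif_pos (show σ₀ c = c ∧ c ≠ 0 from ⟨hc, h0⟩)]
      exact Classical.choose_spec (tr_surj c hc)
  have htau0 : τ 0 = 0 := by simp only [hτ]; rw [dif_neg (by simp)]
  set f := trep z with hfdef
  set g := cpoly m (fun i : Fin m => τ (f.coeff (i : ℕ))) with hg
  refine ⟨tmk K' m g, ?_, ?_⟩
  · rw [sig_tmk σ₀ σ hσ, ← map_add]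
    have hgf : g + g.map σ₀ = f := by
      ext j
      rw [coeff_add, coeff_map, hg, cpoly_coeff]
      split
      · next h =>
        exact htau _ (coeff_fixed σ₀ σ hσ hz j)
      · next h =>
        rw [map_zero, add_zero]
        symm
        apply coeff_eq_zero_of_degree_lt
        exact lt_of_lt_of_le (degree_trep z) (by exact_mod_cast Nat.le_of_not_lt h)
    rw [hgf]
    exact tmk_trep z
  · intro k hk hdz
    rw [t_pow_dvd_iff hk] at hdz
    rw [X_pow_dvd_iff] at hdz
    have hdg : (X : K'[X]) ^ k ∣ g := by
      rw [X_pow_dvd_iff]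
      intro i hi
      rw [hg, cpoly_coeff]
      split
      · next h => rw [hdz i hi, htau0]
      · rfl
    obtain ⟨w, hw⟩ := hdg
    exact ⟨tmk K' m w, by rw [hw, map_mul, map_pow]⟩

end Main

section Main2

variable {K' : Type*} [Field K'] [Fintype K'] {Q m : ℕ} (hQ : 2 ≤ Q) (hm : 0 < m)
  (hK' : Fintype.card K' = Q ^ 2) (σ₀ : K' →+* K') (hσ₀ : ∀ x, σ₀ x = x ^ Q)
  (σ : TruncPoly K' m →+* TruncPoly K' m)
  (hσ : σ.comp (Ideal.Quotient.mk (Ideal.span {(X : K'[X]) ^ m}))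
      = (Ideal.Quotient.mk (Ideal.span {(X : K'[X]) ^ m})).comp (mapRingHom σ₀))

include hσ in
lemma sig_inv_unit (v : (TruncPoly K' m)ˣ) (hv : σ ↑v = (↑v : TruncPoly K' m)) :
    σ (↑v⁻¹ : TruncPoly K' m) = (↑v⁻¹ : TruncPoly K' m) := by
  have h1 : σ (↑v⁻¹ : TruncPoly K' m) * ↑v = 1 := by
    rw [← hv, ← map_mul, Units.inv_mul, map_one]
  calc σ (↑v⁻¹ : TruncPoly K' m) = σ (↑v⁻¹ : TruncPoly K' m) * ((↑v : TruncPoly K' m) * ↑v⁻¹) := by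
        rw [Units.mul_inv, mul_one]
    _ = (σ (↑v⁻¹ : TruncPoly K' m) * ↑v) * ↑v⁻¹ := by ring
    _ = ↑v⁻¹ := by rw [h1, one_mul]

include hQ hK' hσ₀ hσ in
lemma lift_one (j : ℕ) : ∀ r : TruncPoly K' m, σ r = r → 1 ≤ m - j →
    (tmk K' m X) ^ (m - j) ∣ (r - 1) →
    ∃ u : (TruncPoly K' m)ˣ, (↑u : TruncPoly K' m) * σ ↑u = r := by
  induction j with
  | zero =>
    intro r hr h1 hdvd
    rw [Nat.sub_zero, t_pow_m] at hdvd
    have : r = 1 := by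
      have := zero_dvd_iff.mp hdvd
      linear_combination this
    exact ⟨1, by simp [this]⟩
  | succ j ih =>
    intro r hr h1 hdvd
    set t := tmk K' m X with ht
    set k := m - (j + 1) with hkdef
    have hk1 : 1 ≤ k := h1
    have hkm : k ≤ m := Nat.sub_le _ _
    have hjm : j + 1 < m := by omega
    have hmj : m - j = k + 1 := by omega
    obtain ⟨δ, hδ, hδdvd⟩ := trace_R hQ hK' σ₀ hσ₀ σ hσ (z := r - 1)
      (by rw [map_sub, hr, map_one])
    have hdδ : t ^ k ∣ δ := hδdvd k hkm hdvd
    have htδ : t ∣ δ := dvd_trans (by simpa using pow_dvd_pow t hk1) hdδ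
    have hnil : IsNilpotent δ := isNilpotent_of_t_dvd htδ
    have hu1 : IsUnit (1 + δ) := hnil.isUnit_add_left_of_commute isUnit_one (Commute.all _ _)
    set u₁ := hu1.unit with hu₁def
    have hu1v : (↑u₁ : TruncPoly K' m) = 1 + δ := hu1.unit_spec
    set v := u₁ * Units.map σ.toMonoidHom u₁ with hv
    have hvv : (↑v : TruncPoly K' m) = (1 + δ) * (1 + σ δ) := by
      rw [hv, Units.val_mul, hu1v, Units.coe_map]
      congr 1
      show σ (↑u₁ : TruncPoly K' m) = 1 + σ δ
      rw [hu1v, map_add, map_one]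
    have hvr : (↑v : TruncPoly K' m) = r + δ * σ δ := by
      rw [hvv]
      linear_combination hδ
    have hσv : σ ↑v = (↑v : TruncPoly K' m) := by
      rw [hvv, map_mul, map_add, map_add, map_one, sig_invol hK' σ₀ hσ₀ σ hσ]
      ring
    set r₂ := r * (↑v⁻¹ : TruncPoly K' m) with hr₂def
    have hr₂ : σ r₂ = r₂ := by
      rw [hr₂def, map_mul, hr, sig_inv_unit σ₀ σ hσ v hσv]
    have hv1 : (↑v : TruncPoly K' m) * ↑v⁻¹ = 1 := by
      rw [Units.mul_inv]
    have hr₂1 : t ^ (k + 1) ∣ r₂ - 1 := by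
      have h2k : t ^ (k + 1) ∣ δ * σ δ := by
        have h2 := mul_dvd_mul hdδ (sig_dvd σ₀ σ hσ hdδ)
        rw [← pow_add] at h2
        exact dvd_trans (pow_dvd_pow _ (by omega)) h2
      have heq : r₂ - 1 = -(δ * σ δ) * ↑v⁻¹ := by
        rw [hr₂def]
        linear_combination hv1 - (↑v⁻¹ : TruncPoly K' m) * hvr
      rw [heq]
      exact (dvd_neg.mpr h2k).mul_right _
    obtain ⟨u₂, hu₂⟩ := ih r₂ hr₂ (by omega) (by rw [hmj]; exact hr₂1)
    refine ⟨u₂ * u₁, ?_⟩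
    have hvcoe : (↑u₁ : TruncPoly K' m) * σ ↑u₁ = ↑v := by
      rw [hv, Units.val_mul, Units.coe_map]
      rfl
    rw [Units.val_mul, map_mul]
    calc (↑u₂ : TruncPoly K' m) * ↑u₁ * (σ ↑u₂ * σ ↑u₁)
        = ((↑u₂ : TruncPoly K' m) * σ ↑u₂) * ((↑u₁ : TruncPoly K' m) * σ ↑u₁) := by ring
      _ = r₂ * ↑v := by rw [hu₂, hvcoe]
      _ = r * ((↑v⁻¹ : TruncPoly K' m) * ↑v) := by rw [hr₂def]; ring
      _ = r := by rw [Units.inv_mul, mul_one]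

include hQ hm hK' hσ₀ hσ in
lemma norm_surj_R : ∀ r : (TruncPoly K' m)ˣ, σ ↑r = (↑r : TruncPoly K' m) →
    ∃ u : (TruncPoly K' m)ˣ, (↑u : TruncPoly K' m) * σ ↑u = ↑r := by
  intro r hr
  set r₀ := tev K' m hm (↑r : TruncPoly K' m) with hr₀
  have hr₀ne : r₀ ≠ 0 := by
    rw [hr₀, ← isUnit_iff_tev hm]
    exact r.isUnit
  have hr₀fix : σ₀ r₀ = r₀ := by
    rw [hr₀, ← tev_sig hm σ₀ σ hσ, hr]
  obtain ⟨a, ha⟩ := norm_surj hQ hK' σ₀ hσ₀ r₀ hr₀fix hr₀ne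
  have hane : a ≠ 0 := by
    intro h
    rw [h, zero_mul] at ha
    exact hr₀ne ha.symm
  set c := tmk K' m (C a) with hc
  have hcu : IsUnit c := by
    rw [isUnit_iff_tev hm, hc, tev_tmk]
    simpa using hane
  set u₁ := hcu.unit with hu₁def
  have hu1v : (↑u₁ : TruncPoly K' m) = c := hcu.unit_spec
  set v := u₁ * Units.map σ.toMonoidHom u₁ with hv
  have hvcoe : (↑u₁ : TruncPoly K' m) * σ ↑u₁ = ↑v := by
    rw [hv, Units.val_mul, Units.coe_map]
    rfl
  have hvv : (↑v : TruncPoly K' m) = tmk K' m (C r₀) := by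
    rw [← hvcoe, hu1v, hc, sig_tmk σ₀ σ hσ, map_C, ← map_mul, ← C_mul, ha]
  have hσv : σ ↑v = (↑v : TruncPoly K' m) := by
    rw [← hvcoe, map_mul, sig_invol hK' σ₀ hσ₀ σ hσ]
    ring
  set r₂ := (↑r : TruncPoly K' m) * (↑v⁻¹ : TruncPoly K' m) with hr₂def
  have hr₂fix : σ r₂ = r₂ := by
    rw [hr₂def, map_mul, hr, sig_inv_unit σ₀ σ hσ v hσv]
  have htev_v : tev K' m hm (↑v : TruncPoly K' m) = r₀ := by
    rw [hvv, tev_tmk]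
    simp
  have htev_vinv : tev K' m hm (↑v⁻¹ : TruncPoly K' m) = r₀⁻¹ := by
    have h1 : tev K' m hm (↑v : TruncPoly K' m) * tev K' m hm (↑v⁻¹ : TruncPoly K' m) = 1 := by
      rw [← map_mul, Units.mul_inv, map_one]
    rw [htev_v] at h1
    field_simp at h1 ⊢
    linear_combination h1
  have hr₂1 : (tmk K' m X) ^ (m - (m - 1)) ∣ r₂ - 1 := by
    have hm1 : m - (m - 1) = 1 := by omega
    rw [hm1, pow_one, t_dvd_iff_tev hm, map_sub, map_one, hr₂def, map_mul,
      htev_vinv, ← hr₀, mul_inv_cancel₀ hr₀ne, sub_self]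
  obtain ⟨u₂, hu₂⟩ := lift_one hQ hK' σ₀ hσ₀ σ hσ (m - 1) r₂ hr₂fix (by omega) hr₂1
  refine ⟨u₂ * u₁, ?_⟩
  rw [Units.val_mul, map_mul]
  calc (↑u₂ : TruncPoly K' m) * ↑u₁ * (σ ↑u₂ * σ ↑u₁)
      = ((↑u₂ : TruncPoly K' m) * σ ↑u₂) * ((↑u₁ : TruncPoly K' m) * σ ↑u₁) := by ring
    _ = r₂ * ↑v := by rw [hu₂, hvcoe]
    _ = ↑r * ((↑v⁻¹ : TruncPoly K' m) * ↑v) := by rw [hr₂def]; ring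
    _ = ↑r := by rw [Units.inv_mul, mul_one]

end Main2

section Counting

/-- units are equivalent to the subtype of unit elements -/
noncomputable def unitsEquivIsUnit' {M : Type*} [Monoid M] : Mˣ ≃ {z : M // IsUnit z} where
  toFun u := ⟨↑u, u.isUnit⟩
  invFun z := z.2.unit
  left_inv u := Units.ext u.isUnit.unit_spec
  right_inv z := Subtype.ext z.2.unit_spec

lemma card_fun_pred {n : ℕ} (hn : 0 < n) {β : Type*} [Finite β] (P : β → Prop) :
    Nat.card {c : Fin n → β // P (c ⟨0, hn⟩)}
      = Nat.card {b : β // P b} * Nat.card β ^ (n - 1) := by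
  classical
  set i0 : Fin n := ⟨0, hn⟩ with hi0
  have e : {c : Fin n → β // P (c i0)} ≃ {b : β // P b} × ({i : Fin n // i ≠ i0} → β) :=
    { toFun := fun c => (⟨c.1 i0, c.2⟩, fun i => c.1 i.1)
      invFun := fun p => ⟨fun i => if h : i = i0 then p.1.1 else p.2 ⟨i, h⟩, by
        dsimp only; rw [dif_pos rfl]; exact p.1.2⟩
      left_inv := fun c => Subtype.ext (funext fun i => by
        dsimp only
        by_cases h : i = i0
        · subst h; rw [dif_pos rfl]
        · rw [dif_neg h])
      right_inv := fun p => by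
        refine Prod.ext (Subtype.ext ?_) (funext fun i => ?_)
        · dsimp only
          rw [dif_pos rfl]
        · dsimp only
          rw [dif_neg i.2] }
  rw [Nat.card_congr e, Nat.card_prod, Nat.card_fun]
  congr 2
  rw [Nat.card_eq_fintype_card, Fintype.card_subtype_compl, Fintype.card_subtype_eq,
    Fintype.card_fin]

end Counting

section Main3

variable {K' : Type*} [Field K'] [Fintype K'] {Q m : ℕ} (hQ : 2 ≤ Q) (hm : 0 < m)
  (hK' : Fintype.card K' = Q ^ 2) (σ₀ : K' →+* K') (hσ₀ : ∀ x, σ₀ x = x ^ Q)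
  (σ : TruncPoly K' m →+* TruncPoly K' m)
  (hσ : σ.comp (Ideal.Quotient.mk (Ideal.span {(X : K'[X]) ^ m}))
      = (Ideal.Quotient.mk (Ideal.span {(X : K'[X]) ^ m})).comp (mapRingHom σ₀))

include hm hK' in
lemma card_units_R : Nat.card (TruncPoly K' m)ˣ = (Q ^ 2 - 1) * (Q ^ 2) ^ (m - 1) := by
  have h1 : ∀ c : Fin m → K', (c ⟨0, hm⟩ ≠ 0) ↔ IsUnit (truncEquiv K' m c) := by
    intro c
    rw [isUnit_iff_tev hm, tev_truncEquiv hm]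
  have e1 : {c : Fin m → K' // c ⟨0, hm⟩ ≠ 0} ≃ {z : TruncPoly K' m // IsUnit z} :=
    Equiv.subtypeEquiv (p := fun c : Fin m → K' => c ⟨0, hm⟩ ≠ 0)
      (q := fun z : TruncPoly K' m => IsUnit z) (truncEquiv K' m) h1
  calc Nat.card (TruncPoly K' m)ˣ
      = Nat.card {z : TruncPoly K' m // IsUnit z} := Nat.card_congr unitsEquivIsUnit'
    _ = Nat.card {c : Fin m → K' // c ⟨0, hm⟩ ≠ 0} := (Nat.card_congr e1).symm
    _ = Nat.card {b : K' // b ≠ 0} * Nat.card K' ^ (m - 1) := card_fun_pred hm (fun b : K' => b ≠ 0)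
    _ = (Q ^ 2 - 1) * (Q ^ 2) ^ (m - 1) := by
        rw [← Nat.card_congr (unitsEquivNeZero (G₀ := K')), Nat.card_units,
          Nat.card_eq_fintype_card, hK']

include hQ hm hK' hσ₀ hσ in
lemma fixed_iff_coeffs (c : Fin m → K') :
    σ (truncEquiv K' m c) = truncEquiv K' m c ↔ ∀ i, σ₀ (c i) = c i := by
  constructor
  · intro h i
    have h2 := coeff_fixed σ₀ σ hσ h (i : ℕ)
    have h3 : trep (truncEquiv K' m c) = cpoly m c := trep_cpoly c
    rw [h3, cpoly_coeff, dif_pos i.isLt] at h2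
    simpa using h2
  · intro h
    show σ (tmk K' m (cpoly m c)) = tmk K' m (cpoly m c)
    rw [sig_tmk σ₀ σ hσ]
    congr 1
    rw [cpoly, Polynomial.map_sum]
    apply Finset.sum_congr rfl
    intro i _
    rw [Polynomial.map_mul, map_C, h i, Polynomial.map_pow, map_X]

include hQ hm hK' hσ₀ hσ in
lemma card_fixed_units_R :
    Nat.card {u : (TruncPoly K' m)ˣ // σ ↑u = (↑u : TruncPoly K' m)}
      = (Q - 1) * Q ^ (m - 1) := by
  classical
  have e1 : {u : (TruncPoly K' m)ˣ // σ ↑u = (↑u : TruncPoly K' m)}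
      ≃ {z : {z : TruncPoly K' m // IsUnit z} // σ z.1 = z.1} :=
    Equiv.subtypeEquiv (p := fun u : (TruncPoly K' m)ˣ => σ ↑u = (↑u : TruncPoly K' m))
      (q := fun z : {z : TruncPoly K' m // IsUnit z} => σ z.1 = z.1)
      unitsEquivIsUnit' (fun u => Iff.rfl)
  have e2 : {z : {z : TruncPoly K' m // IsUnit z} // σ z.1 = z.1}
      ≃ {z : TruncPoly K' m // IsUnit z ∧ σ z = z} :=
    Equiv.subtypeSubtypeEquivSubtypeInter (fun z : TruncPoly K' m => IsUnit z) (fun z => σ z = z)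
  have e3 : {c : Fin m → K' // IsUnit (truncEquiv K' m c)
        ∧ σ (truncEquiv K' m c) = truncEquiv K' m c}
      ≃ {z : TruncPoly K' m // IsUnit z ∧ σ z = z} :=
    Equiv.subtypeEquiv
      (p := fun c : Fin m → K' => IsUnit (truncEquiv K' m c)
        ∧ σ (truncEquiv K' m c) = truncEquiv K' m c)
      (q := fun z : TruncPoly K' m => IsUnit z ∧ σ z = z)
      (truncEquiv K' m) (fun c => Iff.rfl)
  have e4 : {c : Fin m → K' // IsUnit (truncEquiv K' m c)
        ∧ σ (truncEquiv K' m c) = truncEquiv K' m c}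
      ≃ {c : Fin m → K' // (∀ i, σ₀ (c i) = c i) ∧ c ⟨0, hm⟩ ≠ 0} := by
    apply Equiv.subtypeEquivRight
    intro c
    rw [fixed_iff_coeffs hQ hm hK' σ₀ hσ₀ σ hσ, isUnit_iff_tev hm, tev_truncEquiv hm]
    tauto
  have e5 : {c : Fin m → K' // (∀ i, σ₀ (c i) = c i) ∧ c ⟨0, hm⟩ ≠ 0}
      ≃ {y : {c : Fin m → K' // ∀ i, σ₀ (c i) = c i} // y.1 ⟨0, hm⟩ ≠ 0} :=
    (Equiv.subtypeSubtypeEquivSubtypeInter (fun c : Fin m → K' => ∀ i, σ₀ (c i) = c i)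
      (fun c => c ⟨0, hm⟩ ≠ 0)).symm
  have e6 : {y : {c : Fin m → K' // ∀ i, σ₀ (c i) = c i} // y.1 ⟨0, hm⟩ ≠ 0}
      ≃ {c : Fin m → {x : K' // σ₀ x = x} // (c ⟨0, hm⟩ : K') ≠ 0} :=
    Equiv.subtypeEquiv
      (p := fun y : {c : Fin m → K' // ∀ i, σ₀ (c i) = c i} => y.1 ⟨0, hm⟩ ≠ 0)
      (q := fun c : Fin m → {x : K' // σ₀ x = x} => (c ⟨0, hm⟩ : K') ≠ 0)
      (Equiv.subtypePiEquivPi (β := fun _ : Fin m => K') (p := fun _ x => σ₀ x = x))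
      (fun y => Iff.rfl)
  have hcard1 : Nat.card {b : {x : K' // σ₀ x = x} // (b : K') ≠ 0} = Q - 1 := by
    rw [Nat.card_congr (Equiv.subtypeSubtypeEquivSubtypeInter
      (fun x : K' => σ₀ x = x) (fun x => x ≠ 0))]
    exact card_fixed_ne_card hQ hK' σ₀ hσ₀
  have hcard2 : Nat.card {x : K' // σ₀ x = x} = Q := (trace_surj_and_card hQ hK' σ₀ hσ₀).2
  calc Nat.card {u : (TruncPoly K' m)ˣ // σ ↑u = (↑u : TruncPoly K' m)}
      = Nat.card {c : Fin m → {x : K' // σ₀ x = x} // (c ⟨0, hm⟩ : K') ≠ 0} := by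
        rw [Nat.card_congr e1, Nat.card_congr e2, ← Nat.card_congr e3,
          Nat.card_congr e4, Nat.card_congr e5, Nat.card_congr e6]
    _ = Nat.card {b : {x : K' // σ₀ x = x} // (b : K') ≠ 0} * Nat.card {x : K' // σ₀ x = x} ^ (m - 1) :=
        card_fun_pred hm (fun b : {x : K' // σ₀ x = x} => (b : K') ≠ 0)
    _ = (Q - 1) * Q ^ (m - 1) := by rw [hcard1, hcard2]

end Main3

section Final

variable {K' : Type*} [Field K'] [Fintype K'] {Q m : ℕ} (hQ : 2 ≤ Q) (hm : 0 < m)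
  (hK' : Fintype.card K' = Q ^ 2) (σ₀ : K' →+* K') (hσ₀ : ∀ x, σ₀ x = x ^ Q)
  (σ : TruncPoly K' m →+* TruncPoly K' m)
  (hσ : σ.comp (Ideal.Quotient.mk (Ideal.span {(X : K'[X]) ^ m}))
      = (Ideal.Quotient.mk (Ideal.span {(X : K'[X]) ^ m})).comp (mapRingHom σ₀))

/-- the norm homomorphism on units -/
noncomputable def truncNormHom (σ : TruncPoly K' m →+* TruncPoly K' m) :
    (TruncPoly K' m)ˣ →* (TruncPoly K' m)ˣ where
  toFun u := u * Units.map σ.toMonoidHom u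
  map_one' := by simp
  map_mul' a b := by
    simp only [map_mul]
    exact mul_mul_mul_comm a b (Units.map σ.toMonoidHom a) (Units.map σ.toMonoidHom b)

lemma truncNormHom_coe (u : (TruncPoly K' m)ˣ) :
    ((truncNormHom σ u : (TruncPoly K' m)ˣ) : TruncPoly K' m) = ↑u * σ ↑u := by
  show ((u * Units.map σ.toMonoidHom u : (TruncPoly K' m)ˣ) : TruncPoly K' m) = _
  rw [Units.val_mul, Units.coe_map]
  rfl

include hQ hm hK' hσ₀ hσ in
lemma ker_card :
    Nat.card {u : (TruncPoly K' m)ˣ // (↑u : TruncPoly K' m) * σ ↑u = 1}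
      = (Q + 1) * Q ^ (m - 1) := by
  have hker_eq : ∀ u : (TruncPoly K' m)ˣ,
      ((↑u : TruncPoly K' m) * σ ↑u = 1) ↔ u ∈ (truncNormHom σ).ker := by
    intro u
    rw [MonoidHom.mem_ker, ← Units.val_eq_one, truncNormHom_coe]
  have hrange : ∀ u : (TruncPoly K' m)ˣ,
      u ∈ (truncNormHom σ).range ↔ σ ↑u = (↑u : TruncPoly K' m) := by
    intro u
    constructor
    · rintro ⟨w, rfl⟩
      rw [truncNormHom_coe, map_mul, sig_invol hK' σ₀ hσ₀ σ hσ, mul_comm]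
    · intro h
      obtain ⟨u', hu'⟩ := norm_surj_R hQ hm hK' σ₀ hσ₀ σ hσ u h
      exact ⟨u', Units.ext (by rw [truncNormHom_coe, hu'])⟩
  have hcr : Nat.card (truncNormHom σ).range = (Q - 1) * Q ^ (m - 1) := by
    rw [Nat.card_congr (Equiv.subtypeEquivRight hrange)]
    exact card_fixed_units_R hQ hm hK' σ₀ hσ₀ σ hσ
  have hck := card_range_mul_card_ker' (truncNormHom σ)
  rw [hcr, card_units_R hm hK'] at hck
  have harith : (Q ^ 2 - 1) * (Q ^ 2) ^ (m - 1)
      = ((Q - 1) * Q ^ (m - 1)) * ((Q + 1) * Q ^ (m - 1)) := by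
    have h1 : Q ^ 2 - 1 = (Q - 1) * (Q + 1) := by
      obtain ⟨Q', rfl⟩ : ∃ Q', Q = Q' + 1 := ⟨Q - 1, by omega⟩
      have : (Q' + 1) ^ 2 = Q' * (Q' + 2) + 1 := by ring
      rw [this]
      simp only [Nat.add_sub_cancel]
    have h2 : (Q ^ 2) ^ (m - 1) = Q ^ (m - 1) * Q ^ (m - 1) := by
      rw [← pow_mul, two_mul, pow_add]
    rw [h1, h2]
    ring
  rw [harith] at hck
  have hpos : 0 < (Q - 1) * Q ^ (m - 1) := by
    have : 0 < Q - 1 := by omega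
    positivity
  have := Nat.eq_of_mul_eq_mul_left hpos hck
  rw [Nat.card_congr (Equiv.subtypeEquivRight hker_eq)]
  exact this

end Final


/-- Let `q` be a prime power, `d, m ≥ 1`, `R = 𝔽_{q^d}[t]/(t^m)` and `R' = 𝔽_{q^{2d}}[t]/(t^m)`,
with `σ : R' → R'` acting on coefficients by `x ↦ x^(q^d)` and fixing `t` (so that `R` is the
fixed ring of `σ`).  Then the norm map `N(u) = u·σ(u)` is surjective from `(R')ˣ` onto `Rˣ`
(i.e. onto the `σ`-fixed units), and its kernel has cardinality `(q^d + 1)·q^(d(m−1))`. -/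
theorem stmt_14 (q d m : ℕ) (hq : ∃ p k, p.Prime ∧ 0 < k ∧ q = p ^ k)
    (hd : 0 < d) (hm : 0 < m)
    (K' : Type*) [Field K'] [Fintype K'] (hK' : Fintype.card K' = (q ^ d) ^ 2)
    (σ₀ : K' →+* K') (hσ₀ : ∀ x, σ₀ x = x ^ (q ^ d))
    (σ : TruncPoly K' m →+* TruncPoly K' m)
    (hσ : σ.comp (Ideal.Quotient.mk (Ideal.span {(Polynomial.X : Polynomial K') ^ m}))
      = (Ideal.Quotient.mk (Ideal.span {(Polynomial.X : Polynomial K') ^ m})).comp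
          (Polynomial.mapRingHom σ₀)) :
    (∀ r : (TruncPoly K' m)ˣ, σ ↑r = ↑r → ∃ u : (TruncPoly K' m)ˣ, (u : TruncPoly K' m) * σ ↑u = ↑r) ∧
    Nat.card {u : (TruncPoly K' m)ˣ // (u : TruncPoly K' m) * σ ↑u = 1}
      = (q ^ d + 1) * (q ^ d) ^ (m - 1) := by
  have hq2 : 2 ≤ q := by
    obtain ⟨p, k, hp, hk, rfl⟩ := hq
    have := Nat.one_lt_pow hk.ne' hp.one_lt
    omega
  have hQ : 2 ≤ q ^ d := Nat.one_lt_pow hd.ne' (by omega)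
  exact ⟨norm_surj_R hQ hm hK' σ₀ hσ₀ σ hσ, ker_card hQ hm hK' σ₀ hσ₀ σ hσ⟩
end

section
/- Let k be a field with an automorphism σ satisfying σ² = id, let ε ∈ {±1}, and let J ∈ M_n(k) be the full nilpotent Jordan block (ones on the superdiagonal). Suppose h ∈ GL_n(k) satisfies σ(ᵗh) = ε·h and h·J + σ(ᵗJ)·h = 0. Then: (a) h_{i,j} = 0 whenever i + j ≤ n; (b) the antidiagonal entries satisfy h_{k+1, n−k} = (−1)^k·c for all 0 ≤ k ≤ n−1, where c := h_{1,n} ∈ k^× and c + (−1)^n ε σ(c) = 0; (c) more generally h_{k+l, n−k} = (−1)^k ε σ(h_{n,l}) for 1 ≤ l ≤ n−k. -/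
set_option maxHeartbeats 1000000 in
/-- Let `k` be a field with an involution `σ`, `ε = ±1`, and `J ∈ M_n(k)` the full nilpotent
Jordan block.  If `h ∈ GL_n(k)` is `ε`-hermitian (`σ(ᵗh) = ε h`) and satisfies
`h·J + σ(ᵗJ)·h = 0`, then:
(a) `h i j = 0` whenever `(i+1) + (j+1) ≤ n` (1-indexed: `i + j ≤ n`);
with `c := h 0 (n-1)` a unit satisfying `c + (−1)^n ε σ(c) = 0`,
(b) the antidiagonal entries satisfy `h k (n-1-k) = (−1)^k c`;
(c) more generally `h (k+l-1) (n-1-k) = (−1)^k ε σ (h (n-1) (l-1))` for `1 ≤ l ≤ n − k`. -/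
theorem stmt_17 (k : Type*) [Field k] (σ : k →+* k) (hσ : ∀ x, σ (σ x) = x)
    (ε : k) (hε : ε = 1 ∨ ε = -1)
    (n : ℕ) (hn : 0 < n)
    (J : Matrix (Fin n) (Fin n) k)
    (hJ : J = Matrix.of fun i j : Fin n => if (i : ℕ) + 1 = (j : ℕ) then 1 else 0)
    (h : Matrix (Fin n) (Fin n) k) (hinv : IsUnit h)
    (hherm : ∀ i j, σ (h j i) = ε * h i j)
    (heq : h * J + (J.transpose.map σ) * h = 0) :
    (∀ i j : Fin n, (i : ℕ) + 1 + ((j : ℕ) + 1) ≤ n → h i j = 0) ∧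
    IsUnit (h ⟨0, hn⟩ ⟨n - 1, by omega⟩) ∧
    (h ⟨0, hn⟩ ⟨n - 1, by omega⟩ + (-1) ^ n * ε * σ (h ⟨0, hn⟩ ⟨n - 1, by omega⟩) = 0) ∧
    (∀ i : Fin n, h i i.rev = (-1) ^ (i : ℕ) * h ⟨0, hn⟩ ⟨n - 1, by omega⟩) ∧
    (∀ (K l : ℕ) (_hK : K ≤ n - 1) (_hl : 1 ≤ l) (_hln : l ≤ n - K),
      h ⟨K + l - 1, by omega⟩ ⟨n - 1 - K, by omega⟩
        = (-1) ^ K * ε * σ (h ⟨n - 1, by omega⟩ ⟨l - 1, by omega⟩)) := by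
  subst hJ
  have hεsq : ε * ε = 1 := by rcases hε with rfl | rfl <;> ring
  have hE : ∀ i j : Fin n,
      (∑ m : Fin n, h i m * (if (m:ℕ) + 1 = (j:ℕ) then 1 else 0))
      + (∑ m : Fin n, (if (m:ℕ) + 1 = (i:ℕ) then 1 else 0) * h m j) = 0 := by
    intro i j
    have := congrFun (congrFun heq i) j
    simpa [Matrix.mul_apply, Matrix.transpose_apply, Matrix.map_apply, apply_ite σ]
      using this
  have sumL : ∀ (i : Fin n) (b : ℕ) (hb : b + 1 < n),
      (∑ m : Fin n, h i m * (if (m:ℕ) + 1 = b + 1 then 1 else 0)) = h i ⟨b, by omega⟩ := by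
    intro i b hb
    rw [Finset.sum_eq_single (⟨b, by omega⟩ : Fin n)]
    · simp
    · intro m _ hm
      have : (m : ℕ) ≠ b := fun hh => hm (Fin.ext hh)
      simp [this]
    · simp
  have sumR : ∀ (j : Fin n) (a : ℕ) (ha : a + 1 < n),
      (∑ m : Fin n, (if (m:ℕ) + 1 = a + 1 then 1 else 0) * h m j) = h ⟨a, by omega⟩ j := by
    intro j a ha
    rw [Finset.sum_eq_single (⟨a, by omega⟩ : Fin n)]
    · simp
    · intro m _ hm
      have : (m : ℕ) ≠ a := fun hh => hm (Fin.ext hh)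
      simp [this]
    · simp
  have sumR0 : ∀ (j : Fin n),
      (∑ m : Fin n, (if (m:ℕ) + 1 = 0 then 1 else 0) * h m j) = 0 := by
    intro j; simp
  -- first row vanishes except possibly the last entry
  have row0 : ∀ (b : ℕ) (hb : b + 1 < n), h ⟨0, hn⟩ ⟨b, by omega⟩ = 0 := by
    intro b hb
    have := hE ⟨0, hn⟩ ⟨b + 1, hb⟩
    rw [sumL _ b hb, sumR0] at this
    simpa using this
  -- one-step antidiagonal relation
  have step : ∀ (a b : ℕ) (ha : a + 1 < n) (hb : b + 1 < n),
      h ⟨a + 1, ha⟩ ⟨b, by omega⟩ = - h ⟨a, by omega⟩ ⟨b + 1, hb⟩ := by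
    intro a b ha hb
    have := hE ⟨a + 1, ha⟩ ⟨b + 1, hb⟩
    rw [sumL _ b hb, sumR _ a ha] at this
    linear_combination this
  -- moving t steps along an antidiagonal
  have G : ∀ (t a b : ℕ) (h1 : a + t < n) (h2 : t ≤ b) (h3 : b < n),
      h ⟨a + t, h1⟩ ⟨b - t, by omega⟩ = (-1:k)^t * h ⟨a, by omega⟩ ⟨b, h3⟩ := by
    intro t
    induction t with
    | zero => intro a b h1 h2 h3; simp
    | succ t ih =>
      intro a b h1 h2 h3
      have e1 : (⟨a + (t+1), h1⟩ : Fin n) = ⟨(a+t)+1, by omega⟩ :=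
        Fin.ext (show a + (t+1) = (a+t)+1 by omega)
      have hstep : h (⟨(a+t)+1, by omega⟩ : Fin n) ⟨b - (t+1), by omega⟩
          = - h ⟨a + t, by omega⟩ ⟨b - t, by omega⟩ := by
        have e3 : (⟨b - t, by omega⟩ : Fin n) = ⟨(b - (t+1)) + 1, by omega⟩ :=
          Fin.ext (show b - t = (b - (t+1)) + 1 by omega)
        rw [e3]
        exact step (a+t) (b-(t+1)) (by omega) (by omega)
      rw [e1, hstep, ih a b (by omega) (by omega) h3]
      ring
  have G0 : ∀ (t b : ℕ) (h1 : t < n) (h2 : t ≤ b) (h3 : b < n),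
      h ⟨t, h1⟩ ⟨b - t, by omega⟩ = (-1:k)^t * h ⟨0, hn⟩ ⟨b, h3⟩ := by
    intro t b h1 h2 h3
    have e : (⟨t, h1⟩ : Fin n) = ⟨0 + t, by omega⟩ := Fin.ext (show t = 0 + t by omega)
    rw [e]
    exact G t 0 b (by omega) h2 h3
  -- (a)
  have partA : ∀ i j : Fin n, (i : ℕ) + 1 + ((j : ℕ) + 1) ≤ n → h i j = 0 := by
    intro i j hij
    have eJ : j = (⟨(i:ℕ) + (j:ℕ) - (i:ℕ), by omega⟩ : Fin n) :=
      Fin.ext (show (j:ℕ) = (i:ℕ) + (j:ℕ) - (i:ℕ) by omega)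
    rw [eJ]
    have := G0 (i:ℕ) ((i:ℕ) + (j:ℕ)) (by omega) (by omega) (by omega)
    rw [show (⟨(i:ℕ), by omega⟩ : Fin n) = i from Fin.ext rfl] at this
    rw [this, row0 ((i:ℕ) + (j:ℕ)) (by omega), mul_zero]
  -- (b) antidiagonal entries
  have partB : ∀ i : Fin n, h i i.rev = (-1:k) ^ (i : ℕ) * h ⟨0, hn⟩ ⟨n - 1, by omega⟩ := by
    intro i
    have eJ : i.rev = (⟨(n-1) - (i:ℕ), by omega⟩ : Fin n) :=
      Fin.ext (show (i.rev : ℕ) = (n-1) - (i:ℕ) by rw [Fin.val_rev]; omega)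
    rw [eJ]
    have := G0 (i:ℕ) (n-1) (by omega) (by omega) (by omega)
    rw [show (⟨(i:ℕ), by omega⟩ : Fin n) = i from Fin.ext rfl] at this
    exact this
  set c := h ⟨0, hn⟩ ⟨n - 1, by omega⟩ with hc
  -- c is a unit
  have hcne : c ≠ 0 := by
    intro hc0
    have hrow : ∀ m : Fin n, h ⟨0, hn⟩ m = 0 := by
      intro m
      rcases lt_or_ge ((m:ℕ)+1) n with hm | hm
      · have := row0 (m:ℕ) hm
        rwa [show (⟨(m:ℕ), by omega⟩ : Fin n) = m from Fin.ext rfl] at this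
      · have em : m = (⟨n-1, by omega⟩ : Fin n) := Fin.ext (show (m:ℕ) = n-1 by omega)
        rw [em]; exact hc0
    obtain ⟨u, hu⟩ := hinv
    have hone : h * (↑u⁻¹ : Matrix (Fin n) (Fin n) k) = 1 := by
      rw [← hu]; exact_mod_cast u.mul_inv
    have := congrFun (congrFun hone ⟨0, hn⟩) ⟨0, hn⟩
    rw [Matrix.mul_apply] at this
    simp [hrow, Matrix.one_apply] at this
  -- the relation on c
  have hant : h (⟨n-1, by omega⟩ : Fin n) ⟨0, hn⟩ = (-1:k)^(n-1) * c := by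
    have := G0 (n-1) (n-1) (by omega) (le_refl _) (by omega)
    rwa [show (⟨(n-1) - (n-1), by omega⟩ : Fin n) = ⟨0, hn⟩ from
      Fin.ext (show (n-1) - (n-1) = 0 by omega)] at this
  have hkey : (-1:k)^(n-1) * σ c = ε * c := by
    have := hherm ⟨0, hn⟩ ⟨n-1, by omega⟩
    rw [hant] at this
    rw [map_mul, map_pow, map_neg, map_one] at this
    exact this
  have hsq : (-1:k)^(n-1) * (-1:k)^(n-1) = 1 := by
    rw [← pow_add]; exact Even.neg_one_pow ⟨n-1, rfl⟩
  have hodd : (-1:k)^n * (-1:k)^(n-1) = -1 := by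
    rw [← pow_add]; exact Odd.neg_one_pow ⟨n-1, by omega⟩
  have hceq : c + (-1:k) ^ n * ε * σ c = 0 := by
    have h1 : σ c = (-1:k)^(n-1) * (ε * c) := by
      calc σ c = ((-1:k)^(n-1) * (-1:k)^(n-1)) * σ c := by rw [hsq]; ring
        _ = (-1:k)^(n-1) * ((-1:k)^(n-1) * σ c) := by ring
        _ = (-1:k)^(n-1) * (ε * c) := by rw [hkey]
    rw [h1]
    have : c + (-1:k)^n * ε * ((-1:k)^(n-1) * (ε * c))
        = c + ((-1:k)^n * (-1:k)^(n-1)) * ((ε * ε) * c) := by ring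
    rw [this, hodd, hεsq]; ring
  refine ⟨partA, isUnit_iff_ne_zero.mpr hcne, hceq, partB, ?_⟩
  -- (c)
  intro K l hK hl hln
  have eI : (⟨K + l - 1, (by omega : K + l - 1 < n)⟩ : Fin n)
      = ⟨(l-1) + K, by omega⟩ := Fin.ext (show K + l - 1 = (l-1) + K by omega)
  rw [eI, G K (l-1) (n-1) (by omega) (by omega) (by omega)]
  have hh := hherm (⟨l-1, by omega⟩ : Fin n) (⟨n-1, by omega⟩ : Fin n)
  rw [hh]
  linear_combination (-(-1:k)^K * h (⟨l-1, by omega⟩ : Fin n) (⟨n-1, by omega⟩ : Fin n)) * hεsq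
end
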